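/- arXiv:2410.17200 — 3 statements merged into one kernel-verified Lean document; each statement's English description precedes it below -/
import Mathlib

section
/- Uniqueness of the measure-valued PDE solution: assume F ∈ C^1 with F(a) > 0 for all a > 0 and F^c = 1-F > 0 everywhere, hazard h = F'/F^c bounded, and let Ῡ : ℝ_+ → ℝ be continuous. If μ, ν ∈ C(ℝ_+; M_F(ℝ_+)) are two families of finite nonnegative measures with μ_0 = ν_0 and both satisfy, for every φ ∈ C_c^1(ℝ_+), d/dt μ_t(φ) = φ(0) Ῡ(t) + μ_t(φ' - h φ), then μ_t = ν_t for all t ≥ 0. -/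
open Real Set MeasureTheory Filter Topology


lemma aux_hasDerivAt (F G : ℝ → ℝ) (hF : ContDiff ℝ 1 F) (hG : ContDiff ℝ 1 G)
    (hFc : ∀ a : ℝ, 0 < 1 - F a) (c a : ℝ) :
    HasDerivAt (fun x => G (x + c) / (1 - F x))
      (deriv G (a + c) / (1 - F a) + (deriv F a / (1 - F a)) * (G (a + c) / (1 - F a))) a := by
  have hG1 : HasDerivAt (fun x => G (x + c)) (deriv G (a + c)) a := by
    have h1 := ((hG.differentiable one_ne_zero) (a + c)).hasDerivAt
    exact (h1.comp a ((hasDerivAt_id a).add_const c)).congr_deriv (by simp)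
  have hF1 : HasDerivAt (fun x => 1 - F x) (-deriv F a) a := by
    simpa using ((hF.differentiable one_ne_zero a).hasDerivAt).const_sub 1
  have hne : (1 - F a) ≠ 0 := (hFc a).ne'
  have := hG1.div hF1 hne
  refine this.congr_deriv ?_
  field_simp
  ring

lemma aux_taylor (g : ℝ → ℝ) (hg : ContDiff ℝ 1 g) {η δ : ℝ}
    (hδ : ∀ u v : ℝ, |u - v| ≤ δ → |deriv g u - deriv g v| ≤ η)
    {ε : ℝ} (hε : |ε| ≤ δ) (y : ℝ) :
    |g (y - ε) - g y + ε * deriv g y| ≤ η * |ε| := by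
  set φ : ℝ → ℝ := fun r => g (y - r) + r * deriv g y with hφdef
  have hφ : ∀ r : ℝ, HasDerivAt φ (deriv g y - deriv g (y - r)) r := by
    intro r
    have h1 : HasDerivAt (fun r : ℝ => g (y - r)) (-deriv g (y - r)) r := by
      have := ((hg.differentiable one_ne_zero) (y - r)).hasDerivAt
      exact (this.comp r ((hasDerivAt_const r y).sub (hasDerivAt_id r))).congr_deriv (by simp)
    have h2 : HasDerivAt (fun r : ℝ => r * deriv g y) (deriv g y) r := by
      simpa using (hasDerivAt_id r).mul_const (deriv g y)
    have h3 := h1.add h2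
    rw [show deriv g y - deriv g (y - r) = -deriv g (y - r) + deriv g y by ring]
    exact h3
  have key : |φ ε - φ 0| ≤ η * |ε| := by
    rcases le_total 0 ε with hε0 | hε0
    · have := norm_image_sub_le_of_norm_deriv_le_segment'
        (f := φ) (f' := fun r => deriv g y - deriv g (y - r)) (a := 0) (b := ε) (C := η)
        (fun x hx => (hφ x).hasDerivWithinAt) ?_ ε (right_mem_Icc.2 hε0)
      · simpa [abs_of_nonneg hε0] using this
      · intro x hx
        have hxδ : |y - (y - x)| ≤ δ := by
          have : |x| ≤ δ := by
            rw [abs_of_nonneg hx.1]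
            exact le_trans (le_of_lt hx.2) (le_trans (le_abs_self ε) hε)
          simpa using this
        simpa using hδ y (y - x) hxδ
    · have := norm_image_sub_le_of_norm_deriv_le_segment'
        (f := φ) (f' := fun r => deriv g y - deriv g (y - r)) (a := ε) (b := 0) (C := η)
        (fun x hx => (hφ x).hasDerivWithinAt) ?_ 0 (right_mem_Icc.2 hε0)
      · rw [abs_sub_comm]
        simpa [abs_of_nonpos hε0] using this
      · intro x hx
        have hxδ : |y - (y - x)| ≤ δ := by
          have : |x| ≤ δ := by
            rw [abs_of_nonpos (le_of_lt hx.2)]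
            calc -x ≤ -ε := by linarith [hx.1]
              _ ≤ |ε| := neg_le_abs ε
              _ ≤ δ := hε
          simpa using this
        simpa using hδ y (y - x) hxδ
  have : φ ε - φ 0 = g (y - ε) - g y + ε * deriv g y := by simp [hφdef]; ring
  rwa [this] at key

lemma aux_bounded (ψ : ℝ → ℝ) (hc : Continuous ψ) (hs : HasCompactSupport ψ) :
    ∃ M, ∀ x, |ψ x| ≤ M := by
  simpa [Real.norm_eq_abs] using hc.bounded_above_of_compact_support hs

lemma aux_cs_neg (ψ : ℝ → ℝ) (h : HasCompactSupport ψ) :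
    HasCompactSupport fun x => -(ψ x) :=
  h.comp_left (g := Neg.neg) neg_zero

lemma aux_cs_sub (ψ₁ ψ₂ : ℝ → ℝ) (h1 : HasCompactSupport ψ₁) (h2 : HasCompactSupport ψ₂) :
    HasCompactSupport fun x => ψ₁ x - ψ₂ x := by
  have : (fun x => ψ₁ x - ψ₂ x) = fun x => ψ₁ x + -(ψ₂ x) := funext fun x => sub_eq_add_neg _ _
  rw [this]
  exact h1.add (aux_cs_neg _ h2)

lemma aux_cs_shift (ψ : ℝ → ℝ) (hψ : HasCompactSupport ψ) (F : ℝ → ℝ) (c : ℝ) :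
    HasCompactSupport (fun a => ψ (a + c) / (1 - F a)) := by
  apply HasCompactSupport.intro
    (hψ.isCompact.image (continuous_id.sub (continuous_const : Continuous fun _ : ℝ => c)))
  intro x hx
  have hz : ψ (x + c) = 0 := by
    by_contra hne
    exact hx ⟨x + c, subset_tsupport ψ hne, by simp⟩
  simp [hz]

lemma aux_B_deriv (F : ℝ → ℝ) (hF : ContDiff ℝ 1 F) (hFc : ∀ a : ℝ, 0 < 1 - F a)
    (G : ℝ → ℝ) (hGc : ContDiff ℝ 1 G) (hGsupp : HasCompactSupport G)
    (μ : ℝ → Measure ℝ) (hμfin : ∀ t, IsFiniteMeasure (μ t))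
    (hμcont : ∀ φ : ℝ → ℝ, Continuous φ → (∃ M, ∀ x, |φ x| ≤ M) →
      ContinuousOn (fun t => ∫ x, φ x ∂(μ t)) (Set.Ici 0))
    (T t : ℝ) (ht : 0 ≤ t) :
    HasDerivWithinAt
      (fun s => ∫ x, (G (x + (T - s)) - G (x + (T - t))) / (1 - F x) ∂(μ s))
      (∫ x, -(deriv G (x + (T - t)) / (1 - F x)) ∂(μ t)) (Set.Ici 0) t := by
  haveI := hμfin
  have hFcont : Continuous F := hF.continuous
  have hFne : ∀ a : ℝ, (1 - F a) ≠ 0 := fun a => (hFc a).ne'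
  have hGcont : Continuous G := hGc.continuous
  have hG' : Continuous (deriv G) := hGc.continuous_deriv le_rfl
  have hG'supp : HasCompactSupport (deriv G) := hGsupp.deriv
  set w : ℝ → ℝ := fun x => deriv G (x + (T - t)) / (1 - F x) with hwdef
  have hwcont : Continuous w :=
    (hG'.comp (continuous_id.add continuous_const)).div (continuous_const.sub hFcont) hFne
  have hwsupp : HasCompactSupport w := aux_cs_shift (deriv G) hG'supp F (T - t)
  -- radius of support
  obtain ⟨R0, hR0⟩ := hGsupp.isCompact.isBounded.subset_closedBall 0
  set R : ℝ := max R0 0 with hRdef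
  have hRnn : 0 ≤ R := le_max_right _ _
  have hGzero : ∀ y : ℝ, R < |y| → G y = 0 := by
    intro y hy
    apply image_eq_zero_of_notMem_tsupport
    intro hmem
    have h1 := hR0 hmem
    rw [Metric.mem_closedBall, Real.dist_eq, sub_zero] at h1
    exact absurd (h1.trans (le_max_left R0 0)) (not_le.2 hy)
  have hG'zero : ∀ y : ℝ, R < |y| → deriv G y = 0 := by
    intro y hy
    by_contra hne
    have hmem : y ∈ tsupport G := support_deriv_subset (by simpa using hne)
    have h1 := hR0 hmem
    rw [Metric.mem_closedBall, Real.dist_eq, sub_zero] at h1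
    exact absurd (h1.trans (le_max_left R0 0)) (not_le.2 hy)
  -- bound K on the inverse of 1 - F over the relevant compact set
  set lo : ℝ := -(R + 1) - (T - t) with hlodef
  set hi : ℝ := (R + 1) - (T - t) with hhidef
  have hlohi : lo ≤ hi := by rw [hlodef, hhidef]; linarith
  obtain ⟨x₀, hx₀, hKmax⟩ := isCompact_Icc.exists_isMaxOn (nonempty_Icc.2 hlohi)
    (((continuous_const.sub hFcont).inv₀ hFne).continuousOn)
  set K : ℝ := (1 - F x₀)⁻¹ with hKdef
  have hKpos : 0 < K := inv_pos.2 (hFc x₀)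
  have hKb : ∀ x ∈ Icc lo hi, (1 - F x)⁻¹ ≤ K := fun x hx => hKmax hx
  -- mass function
  set m : ℝ → ℝ := fun s => ∫ _x, (1:ℝ) ∂ μ s with hmdef
  have hmmass : ∀ s, m s = ((μ s) univ).toReal := fun s => by simp [hmdef, Measure.real]
  have hmnonneg : 0 ≤ m t := by rw [hmmass]; positivity
  set C : ℝ := m t + 1 with hCdef
  have hCpos : 0 < C := by rw [hCdef]; linarith
  have hmcontOn : ContinuousOn m (Ici 0) :=
    hμcont _ continuous_const ⟨1, fun _x => by norm_num⟩
  set l := 𝓝[Ici 0 \ {t}] t with hldef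
  have hl_le : l ≤ 𝓝[Ici 0] t := nhdsWithin_mono t diff_subset
  have hmem : ∀ᶠ s in l, s ∈ Ici 0 \ {t} := eventually_mem_nhdsWithin
  -- integrands
  have hwint : ∀ s, Integrable (fun x => -(w x)) (μ s) := fun s =>
    (hwcont.neg).integrable_of_hasCompactSupport (aux_cs_neg _ hwsupp)
  have hwbd : ∃ M, ∀ x, |(fun x => -(w x)) x| ≤ M := aux_bounded _ hwcont.neg (aux_cs_neg _ hwsupp)
  have T2 : Tendsto (fun s => ∫ x, -(w x) ∂ μ s) l (𝓝 (∫ x, -(w x) ∂ μ t)) :=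
    ((hμcont _ hwcont.neg hwbd) t (mem_Ici.2 ht)).mono_left hl_le
  -- the remainder integrand
  set Rf : ℝ → ℝ → ℝ := fun s x =>
    G (x + (T - s)) / (1 - F x) - G (x + (T - t)) / (1 - F x)
      + (s - t) * (deriv G (x + (T - t)) / (1 - F x)) with hRfdef
  have hRfcont : ∀ s, Continuous (Rf s) := by
    intro s
    apply Continuous.add
    · exact ((hGcont.comp (continuous_id.add continuous_const)).div
        (continuous_const.sub hFcont) hFne).sub
        ((hGcont.comp (continuous_id.add continuous_const)).div
        (continuous_const.sub hFcont) hFne)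
    · exact continuous_const.mul ((hG'.comp (continuous_id.add continuous_const)).div
        (continuous_const.sub hFcont) hFne)
  have hRfsupp : ∀ s, HasCompactSupport (Rf s) := by
    intro s
    exact (aux_cs_sub _ _ (aux_cs_shift G hGsupp F (T - s)) (aux_cs_shift G hGsupp F (T - t))).add
      ((aux_cs_shift (deriv G) hG'supp F (T - t)).mul_left)
  have hRfint : ∀ s, Integrable (Rf s) (μ s) := fun s =>
    (hRfcont s).integrable_of_hasCompactSupport (hRfsupp s)
  -- quotient form of Rf
  have hRf2 : ∀ s x, Rf s x =
      (G ((x + (T - t)) - (s - t)) - G (x + (T - t))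
        + (s - t) * deriv G (x + (T - t))) / (1 - F x) := by
    intro s x
    rw [hRfdef]
    simp only
    rw [show x + (T - s) = x + (T - t) - (s - t) by ring]
    ring
  -- decomposition of the integral
  have key1 : ∀ s x, (G (x + (T - s)) - G (x + (T - t))) / (1 - F x)
      = Rf s x + (s - t) * (-(w x)) := by
    intro s x
    rw [hRfdef, hwdef]
    simp only
    ring
  have hfs : ∀ s, (∫ x, (G (x + (T - s)) - G (x + (T - t))) / (1 - F x) ∂ μ s)
      = (∫ x, Rf s x ∂ μ s) + (s - t) * ∫ x, -(w x) ∂ μ s := by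
    intro s
    simp only [key1]
    rw [integral_add (hRfint s) ((hwint s).const_mul (s - t)), integral_const_mul]
  -- slope identity
  rw [hasDerivWithinAt_iff_tendsto_slope]
  have hslope : ∀ᶠ s in l, (s - t)⁻¹ * (∫ x, Rf s x ∂ μ s) + (∫ x, -(w x) ∂ μ s)
      = slope (fun s => ∫ x, (G (x + (T - s)) - G (x + (T - t))) / (1 - F x) ∂(μ s)) t s := by
    filter_upwards [hmem] with s hs
    have hst : s - t ≠ 0 := sub_ne_zero.2 hs.2
    rw [slope_def_field, hfs s]
    have hft : (∫ x, (G (x + (T - t)) - G (x + (T - t))) / (1 - F x) ∂ μ t) = 0 := by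
      simp
    rw [hft, sub_zero]
    field_simp [hst]
  -- limit of the remainder term
  have T1 : Tendsto (fun s => (s - t)⁻¹ * (∫ x, Rf s x ∂ μ s)) l (𝓝 0) := by
    rw [NormedAddCommGroup.tendsto_nhds_zero]
    intro ε hε
    have hUC : UniformContinuous (deriv G) :=
      hG'.uniformContinuous_of_tendsto_cocompact hG'supp.is_zero_at_infty
    set η : ℝ := ε / (2 * (K * C + 1)) with hηdef
    have hηpos : 0 < η := by rw [hηdef]; positivity
    obtain ⟨δ, hδpos, hδ⟩ := Metric.uniformContinuous_iff.mp hUC η hηpos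
    have hδ' : ∀ u v : ℝ, |u - v| ≤ δ/2 → |deriv G u - deriv G v| ≤ η := by
      intro u v huv
      have hd : dist u v < δ := by rw [Real.dist_eq]; linarith
      have := hδ hd
      rw [Real.dist_eq] at this
      exact this.le
    have Edist : ∀ᶠ s in l, dist s t < min (δ/2) 1 := by
      have htend : Tendsto (fun s : ℝ => s) l (𝓝 t) := tendsto_id.mono_left nhdsWithin_le_nhds
      exact (Metric.tendsto_nhds.mp htend) _ (lt_min (by positivity) one_pos)
    have Emass : ∀ᶠ s in l, m s ≤ C := by
      have htm : Tendsto m l (𝓝 (m t)) := ((hmcontOn t (mem_Ici.2 ht))).mono_left hl_le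
      have := (Metric.tendsto_nhds.mp htm) 1 one_pos
      refine this.mono (fun s hs => ?_)
      rw [Real.dist_eq] at hs
      have := abs_lt.1 hs
      rw [hCdef]; linarith [this.1, this.2]
    filter_upwards [Edist, Emass, hmem] with s hd hm hs
    have hst : s - t ≠ 0 := sub_ne_zero.2 hs.2
    rw [Real.dist_eq] at hd
    have hε1 : |s - t| ≤ δ/2 := (lt_of_lt_of_le hd (min_le_left _ _)).le
    have hε2 : |s - t| ≤ 1 := (lt_of_lt_of_le hd (min_le_right _ _)).le
    -- pointwise bound on Rf s
    have hpt : ∀ x, |Rf s x| ≤ (η * |s - t|) * K := by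
      intro x
      rw [hRf2 s x]
      rcases le_or_gt |x + (T - t)| (R + 1) with hy | hy
      · have hxmem : x ∈ Icc lo hi := by
          have h2 := abs_le.1 hy
          constructor
          · rw [hlodef]; linarith [h2.1]
          · rw [hhidef]; linarith [h2.2]
        have hnum := aux_taylor G hGc hδ' hε1 (x + (T - t))
        rw [abs_div, abs_of_pos (hFc x), div_eq_mul_inv]
        exact mul_le_mul hnum (hKb x hxmem) (inv_nonneg.2 (hFc x).le)
          (mul_nonneg hηpos.le (abs_nonneg _))
      · have h1 : G (x + (T - t)) = 0 := hGzero _ (by linarith)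
        have h2 : deriv G (x + (T - t)) = 0 := hG'zero _ (by linarith)
        have h3 : G ((x + (T - t)) - (s - t)) = 0 := by
          apply hGzero
          have habs := abs_sub_abs_le_abs_sub (x + (T - t)) (s - t)
          linarith
        rw [h1, h2, h3]
        simp only [sub_zero, mul_zero, add_zero, zero_sub, neg_zero, zero_div, abs_zero]
        exact mul_nonneg (mul_nonneg hηpos.le (abs_nonneg _)) hKpos.le
    have hI : ‖∫ x, Rf s x ∂ μ s‖ ≤ (η * |s - t|) * K * ((μ s) univ).toReal := by
      apply norm_integral_le_of_norm_le_const
      exact Eventually.of_forall (fun x => by rw [Real.norm_eq_abs]; exact hpt x)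
    rw [← hmmass s] at hI
    rw [Real.norm_eq_abs, abs_mul, abs_inv]
    have hstpos : 0 < |s - t| := abs_pos.2 hst
    calc |s - t|⁻¹ * |∫ x, Rf s x ∂ μ s|
        ≤ |s - t|⁻¹ * ((η * |s - t|) * K * m s) := by
          apply mul_le_mul_of_nonneg_left _ (inv_nonneg.2 hstpos.le)
          rw [← Real.norm_eq_abs]
          exact hI
      _ = η * K * m s := by
          have habs : |s - t| ≠ 0 := abs_ne_zero.2 hst
          field_simp
      _ ≤ η * K * C := by
          apply mul_le_mul_of_nonneg_left hm (by positivity)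
      _ < ε := by
          rw [hηdef, div_mul_eq_mul_div, div_mul_eq_mul_div,
            div_lt_iff₀ (by nlinarith [hKpos, hCpos] : (0:ℝ) < 2 * (K * C + 1))]
          nlinarith [mul_pos (mul_pos hε hKpos) hCpos, hε]
  have hadd := T1.add T2
  rw [zero_add] at hadd
  exact Tendsto.congr' hslope hadd


/-- **Uniqueness for the measure-valued FLLN transport PDE.**
Assume `F ∈ C¹` with `F(a) > 0` for `a > 0`, `Fᶜ = 1 - F > 0`, bounded hazard
`h = F'/Fᶜ`, and `Ῡ` continuous.  If two weakly-continuous families of finite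
nonnegative measures `μ, ν` on `ℝ₊` with `μ₀ = ν₀` both satisfy, for every
`φ ∈ C¹_c(ℝ₊)`, `d/dt μ_t(φ) = φ(0) Ῡ(t) + μ_t(φ' - h φ)`, then `μ_t = ν_t`
for all `t ≥ 0`. -/
theorem measure_valued_PDE_uniqueness
    (F : ℝ → ℝ) (hF : ContDiff ℝ 1 F)
    (hFpos : ∀ a : ℝ, 0 < a → 0 < F a)
    (hFc : ∀ a : ℝ, 0 < 1 - F a)
    (h : ℝ → ℝ) (hdef : ∀ a, h a = deriv F a / (1 - F a))
    (hbd : ∃ M, ∀ a, |h a| ≤ M)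
    (Υ : ℝ → ℝ) (hΥ : Continuous Υ)
    (μ ν : ℝ → Measure ℝ)
    (hμfin : ∀ t, IsFiniteMeasure (μ t)) (hνfin : ∀ t, IsFiniteMeasure (ν t))
    (hμsupp : ∀ t, μ t (Set.Iio 0) = 0) (hνsupp : ∀ t, ν t (Set.Iio 0) = 0)
    -- weak continuity of `t ↦ μ_t` and `t ↦ ν_t`
    (hμcont : ∀ φ : ℝ → ℝ, Continuous φ → (∃ M, ∀ x, |φ x| ≤ M) →
      ContinuousOn (fun t => ∫ x, φ x ∂(μ t)) (Set.Ici 0))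
    (hνcont : ∀ φ : ℝ → ℝ, Continuous φ → (∃ M, ∀ x, |φ x| ≤ M) →
      ContinuousOn (fun t => ∫ x, φ x ∂(ν t)) (Set.Ici 0))
    (h0 : μ 0 = ν 0)
    (hμPDE : ∀ φ : ℝ → ℝ, ContDiff ℝ 1 φ → HasCompactSupport φ → ∀ t : ℝ, 0 ≤ t →
      HasDerivWithinAt (fun s => ∫ x, φ x ∂(μ s))
        (φ 0 * Υ t + ∫ x, (deriv φ x - h x * φ x) ∂(μ t)) (Set.Ici 0) t)
    (hνPDE : ∀ φ : ℝ → ℝ, ContDiff ℝ 1 φ → HasCompactSupport φ → ∀ t : ℝ, 0 ≤ t →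
      HasDerivWithinAt (fun s => ∫ x, φ x ∂(ν s))
        (φ 0 * Υ t + ∫ x, (deriv φ x - h x * φ x) ∂(ν t)) (Set.Ici 0) t) :
    ∀ t : ℝ, 0 ≤ t → μ t = ν t := by
  intro T hT
  haveI := hμfin T
  haveI := hνfin T
  have hFcont : Continuous F := hF.continuous
  have hFne : ∀ a : ℝ, (1 - F a) ≠ 0 := fun a => (hFc a).ne'
  -- Step 1: the duality identity for all C¹ compactly supported test functions
  have key : ∀ g : ℝ → ℝ, ContDiff ℝ 1 g → HasCompactSupport g →
      ∫ x, g x ∂(μ T) = ∫ x, g x ∂(ν T) := by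
    intro g hg hgsupp
    set G : ℝ → ℝ := fun x => (1 - F x) * g x with hGdef
    have hGc : ContDiff ℝ 1 G := (contDiff_const.sub hF).mul hg
    have hGsupp : HasCompactSupport G := hgsupp.mul_left
    have hvC : ∀ s : ℝ, ContDiff ℝ 1 (fun a => G (a + (T - s)) / (1 - F a)) := fun s =>
      (hGc.comp (contDiff_id.add contDiff_const)).div (contDiff_const.sub hF) hFne
    have hvS : ∀ s : ℝ, HasCompactSupport (fun a => G (a + (T - s)) / (1 - F a)) := fun s =>
      aux_cs_shift G hGsupp F (T - s)
    have hvcont : ∀ s : ℝ, Continuous (fun a => G (a + (T - s)) / (1 - F a)) := fun s =>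
      (hvC s).continuous
    have hintμ : ∀ s r : ℝ, Integrable (fun a => G (a + (T - s)) / (1 - F a)) (μ r) := by
      intro s r
      haveI := hμfin r
      exact (hvcont s).integrable_of_hasCompactSupport (hvS s)
    have hintν : ∀ s r : ℝ, Integrable (fun a => G (a + (T - s)) / (1 - F a)) (ν r) := by
      intro s r
      haveI := hνfin r
      exact (hvcont s).integrable_of_hasCompactSupport (hvS s)
    set f : ℝ → ℝ := fun s => (∫ x, G (x + (T - s)) / (1 - F x) ∂ μ s)
        - ∫ x, G (x + (T - s)) / (1 - F x) ∂ ν s with hfdef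
    have hderiv : ∀ t : ℝ, 0 ≤ t → HasDerivWithinAt f 0 (Set.Ici 0) t := by
      intro t ht
      have hwid : ∀ x : ℝ, deriv (fun a => G (a + (T - t)) / (1 - F a)) x
          - h x * (G (x + (T - t)) / (1 - F x)) = deriv G (x + (T - t)) / (1 - F x) := by
        intro x
        rw [(aux_hasDerivAt F G hF hGc hFc (T - t) x).deriv, hdef]
        ring
      have Aμ := hμPDE _ (hvC t) (hvS t) t ht
      have Aν := hνPDE _ (hvC t) (hvS t) t ht
      simp only [hwid] at Aμ Aν
      have Bμ := aux_B_deriv F hF hFc G hGc hGsupp μ hμfin hμcont T t ht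
      have Bν := aux_B_deriv F hF hFc G hGc hGsupp ν hνfin hνcont T t ht
      have comb := (Aμ.sub Aν).add (Bμ.sub Bν)
      have comb' : HasDerivWithinAt (fun s =>
          ((∫ x, (fun a => G (a + (T - t)) / (1 - F a)) x ∂ μ s)
            - ∫ x, (fun a => G (a + (T - t)) / (1 - F a)) x ∂ ν s)
          + ((∫ x, (G (x + (T - s)) - G (x + (T - t))) / (1 - F x) ∂ μ s)
            - ∫ x, (G (x + (T - s)) - G (x + (T - t))) / (1 - F x) ∂ ν s))
          0 (Set.Ici 0) t := by
        refine comb.congr_deriv ?_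
        rw [integral_neg, integral_neg]
        ring
      have hsplitμ : ∀ s : ℝ, (∫ x, (G (x + (T - s)) - G (x + (T - t))) / (1 - F x) ∂ μ s)
          = (∫ x, G (x + (T - s)) / (1 - F x) ∂ μ s)
            - ∫ x, G (x + (T - t)) / (1 - F x) ∂ μ s := by
        intro s
        simp only [sub_div]
        exact integral_sub (hintμ s s) (hintμ t s)
      have hsplitν : ∀ s : ℝ, (∫ x, (G (x + (T - s)) - G (x + (T - t))) / (1 - F x) ∂ ν s)
          = (∫ x, G (x + (T - s)) / (1 - F x) ∂ ν s)
            - ∫ x, G (x + (T - t)) / (1 - F x) ∂ ν s := by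
        intro s
        simp only [sub_div]
        exact integral_sub (hintν s s) (hintν t s)
      apply comb'.congr
      · intro y _
        simp only [hfdef, hsplitμ, hsplitν]
        ring
      · simp only [hfdef, hsplitμ, hsplitν]
        ring
    have hcont : ContinuousOn f (Set.Ici 0) := fun x hx => (hderiv x hx).continuousWithinAt
    have hconst := constant_of_has_deriv_right_zero (f := f) (a := 0) (b := T)
      (hcont.mono Icc_subset_Ici_self)
      (fun x hx => (hderiv x hx.1).mono (Ici_subset_Ici.mpr hx.1))
    have hfT := hconst T (right_mem_Icc.mpr hT)
    have hf0 : f 0 = 0 := by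
      simp only [hfdef]
      rw [h0, sub_self]
    have hvT : ∀ x : ℝ, G (x + (T - T)) / (1 - F x) = g x := by
      intro x
      rw [sub_self, add_zero, hGdef]
      exact mul_div_cancel_left₀ (g x) (hFne x)
    have hfTval : f T = (∫ x, g x ∂ μ T) - ∫ x, g x ∂ ν T := by
      simp only [hfdef, hvT]
    rw [hfTval, hf0] at hfT
    linarith [hfT]
  -- Step 2: from the integral identity to equality of measures
  refine Measure.ext_of_Iic (μ T) (ν T) (fun b => ?_)
  rcases lt_or_ge b 0 with hb | hb
  · rw [measure_mono_null (fun x hx => lt_of_le_of_lt hx hb : Set.Iic b ⊆ Set.Iio 0) (hμsupp T),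
      measure_mono_null (fun x hx => lt_of_le_of_lt hx hb : Set.Iic b ⊆ Set.Iio 0) (hνsupp T)]
  · set gseq : ℕ → ℝ → ℝ := fun n a => Real.smoothTransition (a + 2) *
        Real.smoothTransition ((b + ((n : ℝ) + 1)⁻¹ - a) * ((n : ℝ) + 1)) with hgseq
    have hnpos : ∀ n : ℕ, (0 : ℝ) < (n : ℝ) + 1 := fun n => by positivity
    have hgC : ∀ n, ContDiff ℝ 1 (gseq n) := fun n =>
      (Real.smoothTransition.contDiff.comp (contDiff_id.add contDiff_const)).mul
        (Real.smoothTransition.contDiff.comp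
          ((contDiff_const.sub contDiff_id).mul contDiff_const))
    have hgsupp : ∀ n, HasCompactSupport (gseq n) := by
      intro n
      apply HasCompactSupport.intro (isCompact_Icc (a := (-2 : ℝ)) (b := b + 1))
      intro x hx
      rw [Set.mem_Icc, not_and_or] at hx
      rw [hgseq]
      simp only
      rcases hx with hx | hx
      · rw [Real.smoothTransition.zero_of_nonpos (by push_neg at hx; linarith), zero_mul]
      · push_neg at hx
        have hinv : ((n : ℝ) + 1)⁻¹ ≤ 1 := by
          rw [inv_le_one_iff₀]
          right
          linarith [Nat.cast_nonneg (α := ℝ) n]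
        rw [Real.smoothTransition.zero_of_nonpos (mul_nonpos_iff.2 (Or.inr
          ⟨by linarith, (hnpos n).le⟩)), mul_zero]
    have hgbd : ∀ n x, |gseq n x| ≤ 1 := by
      intro n x
      rw [hgseq]
      simp only
      rw [abs_of_nonneg (mul_nonneg (Real.smoothTransition.nonneg _)
        (Real.smoothTransition.nonneg _))]
      exact mul_le_one₀ (Real.smoothTransition.le_one _) (Real.smoothTransition.nonneg _)
        (Real.smoothTransition.le_one _)
    have hlim : ∀ x : ℝ, 0 ≤ x → Filter.Tendsto (fun n => gseq n x) Filter.atTop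
        (nhds (Set.indicator (Set.Iic b) (fun _ => (1 : ℝ)) x)) := by
      intro x hx
      rcases le_or_gt x b with hxb | hxb
      · have hone : ∀ n : ℕ, gseq n x = 1 := by
          intro n
          rw [hgseq]
          simp only
          have harg : (b + ((n : ℝ) + 1)⁻¹ - x) * ((n : ℝ) + 1)
              = (b - x) * ((n : ℝ) + 1) + 1 := by
            field_simp
            ring
          rw [Real.smoothTransition.one_of_one_le (by linarith),
            Real.smoothTransition.one_of_one_le (by
              rw [harg]
              nlinarith [mul_nonneg (sub_nonneg.2 hxb) (hnpos n).le]), mul_one]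
        rw [Set.indicator_of_mem (Set.mem_Iic.2 hxb)]
        simp only [hone]
        exact tendsto_const_nhds
      · rw [Set.indicator_of_notMem (by simpa [Set.mem_Iic] using not_le.2 hxb)]
        obtain ⟨N, hN⟩ := exists_nat_gt ((x - b)⁻¹)
        have hzero : ∀ n ≥ N, gseq n x = 0 := by
          intro n hn
          rw [hgseq]
          simp only
          have hxbpos : 0 < x - b := sub_pos.2 hxb
          have h1 : (x - b)⁻¹ < (n : ℝ) + 1 := by
            calc (x - b)⁻¹ < (N : ℝ) := hN
              _ ≤ (n : ℝ) := Nat.cast_le.2 hn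
              _ ≤ (n : ℝ) + 1 := by linarith
          have h2 : ((n : ℝ) + 1)⁻¹ < x - b := by
            rw [← inv_inv (x - b)]
            exact inv_strictAnti₀ (inv_pos.2 hxbpos) h1
          rw [Real.smoothTransition.zero_of_nonpos (mul_nonpos_iff.2 (Or.inr
            ⟨by linarith, (hnpos n).le⟩)), mul_zero]
        refine Filter.Tendsto.congr' ?_ tendsto_const_nhds
        exact Filter.eventually_atTop.2 ⟨N, fun n hn => (hzero n hn).symm⟩
    have hμae : ∀ᵐ x ∂ (μ T), 0 ≤ x := by
      rw [MeasureTheory.ae_iff]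
      have hset : {x : ℝ | ¬ 0 ≤ x} = Set.Iio 0 := by ext x; simp [not_le]
      rw [hset]
      exact hμsupp T
    have hνae : ∀ᵐ x ∂ (ν T), 0 ≤ x := by
      rw [MeasureTheory.ae_iff]
      have hset : {x : ℝ | ¬ 0 ≤ x} = Set.Iio 0 := by ext x; simp [not_le]
      rw [hset]
      exact hνsupp T
    have hμlim : Filter.Tendsto (fun n => ∫ x, gseq n x ∂ μ T) Filter.atTop
        (nhds (∫ x, Set.indicator (Set.Iic b) (fun _ => (1 : ℝ)) x ∂ μ T)) := by
      apply tendsto_integral_of_dominated_convergence (bound := fun _ => (1 : ℝ))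
      · exact fun n => ((hgC n).continuous).aestronglyMeasurable
      · exact integrable_const 1
      · exact fun n => Filter.Eventually.of_forall
          (fun x => by rw [Real.norm_eq_abs]; exact hgbd n x)
      · exact hμae.mono (fun x hx => hlim x hx)
    have hνlim : Filter.Tendsto (fun n => ∫ x, gseq n x ∂ ν T) Filter.atTop
        (nhds (∫ x, Set.indicator (Set.Iic b) (fun _ => (1 : ℝ)) x ∂ ν T)) := by
      apply tendsto_integral_of_dominated_convergence (bound := fun _ => (1 : ℝ))
      · exact fun n => ((hgC n).continuous).aestronglyMeasurable
      · exact integrable_const 1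
      · exact fun n => Filter.Eventually.of_forall
          (fun x => by rw [Real.norm_eq_abs]; exact hgbd n x)
      · exact hνae.mono (fun x hx => hlim x hx)
    have heqn : ∀ n, ∫ x, gseq n x ∂ μ T = ∫ x, gseq n x ∂ ν T := fun n =>
      key (gseq n) (hgC n) (hgsupp n)
    have hlimeq : (∫ x, Set.indicator (Set.Iic b) (fun _ => (1 : ℝ)) x ∂ μ T)
        = ∫ x, Set.indicator (Set.Iic b) (fun _ => (1 : ℝ)) x ∂ ν T :=
      tendsto_nhds_unique (Filter.Tendsto.congr heqn hμlim) hνlim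
    rw [integral_indicator_const (1 : ℝ) measurableSet_Iic,
      integral_indicator_const (1 : ℝ) measurableSet_Iic, smul_eq_mul, smul_eq_mul,
      mul_one, mul_one] at hlimeq
    exact (ENNReal.toReal_eq_toReal_iff' (measure_ne_top _ _) (measure_ne_top _ _)).1 hlimeq
end

section
/- Let (τ_j) be i.i.d. random variables with law μ̄̄_0 on [0,∞), let φ ∈ H^1(ℝ_+), and for t ≥ 0 set Z_{j,t} = φ(τ_j + t), Z̄_{j,t} = Z_{j,t} − E[Z_{j,t}]. Then for any t₁ < t < t₂ and any N, n with n ≤ N: (1/N²) E[ ( Σ_{j=1}^n (Z̄_{j,t} − Z̄_{j,t₁}) )² ( Σ_{j=1}^n (Z̄_{j,t₂} − Z̄_{j,t}) )² ] ≤ C c_φ^4 (t₂ − t₁)², where c_φ² = ∫_0^∞ |φ'(r)|² dr and C is a universal constant. -/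
open Real Set MeasureTheory ProbabilityTheory

lemma amgm_sq_le {I a b : ℝ} (hI : 0 ≤ I) (ha : 0 ≤ a) (hb : 0 ≤ b)
    (h : ∀ lam : ℝ, 0 < lam → I ≤ (lam * a + b / lam) / 2) : I ^ 2 ≤ a * b := by
  rcases eq_or_lt_of_le ha with rfl | ha'
  · by_contra hcon
    push_neg at hcon
    have hI0 : 0 < I := by nlinarith
    have h2 := h (b / I + 1) (by positivity)
    have : b / (b / I + 1) ≤ I := by
      rw [div_le_iff₀ (by positivity)]
      have hbi : b / I * I = b := div_mul_cancel₀ _ (ne_of_gt hI0)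
      nlinarith [hbi]
    nlinarith
  rcases eq_or_lt_of_le hb with rfl | hb'
  · by_contra hcon
    push_neg at hcon
    have hI0 : 0 < I := by nlinarith
    have h2 := h (I / a) (by positivity)
    rw [div_mul_cancel₀ _ (ne_of_gt ha')] at h2
    simp at h2
    nlinarith
  · have hl : (0:ℝ) < Real.sqrt b / Real.sqrt a := by positivity
    have h2 := h _ hl
    have hsa : Real.sqrt a ^ 2 = a := Real.sq_sqrt ha
    have hsb : Real.sqrt b ^ 2 = b := Real.sq_sqrt hb
    have e1 : Real.sqrt b / Real.sqrt a * a = Real.sqrt b * Real.sqrt a := by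
      field_simp; nlinarith [Real.sqrt_nonneg a, Real.sqrt_nonneg b]
    have e2 : b / (Real.sqrt b / Real.sqrt a) = Real.sqrt b * Real.sqrt a := by
      rw [div_div_eq_mul_div]; field_simp; nlinarith [Real.sqrt_nonneg a, Real.sqrt_nonneg b]
    rw [e1, e2] at h2
    nlinarith [Real.sqrt_nonneg a, Real.sqrt_nonneg b]

lemma holder_bound (φ φ' : ℝ → ℝ)
    (hφ' : MemLp φ' 2 (volume.restrict (Set.Ici (0:ℝ))))
    (hrep : ∀ t : ℝ, 0 ≤ t → φ t = φ 0 + ∫ s in (0:ℝ)..t, φ' s)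
    {x y : ℝ} (hx : 0 ≤ x) (hxy : x ≤ y) :
    |φ y - φ x| ≤ Real.sqrt (∫ r in Set.Ici (0:ℝ), (φ' r)^2) * Real.sqrt (y - x) := by
  set c2 : ℝ := ∫ r in Set.Ici (0:ℝ), (φ' r)^2 with hc2def
  have hc2 : 0 ≤ c2 := setIntegral_nonneg measurableSet_Ici (fun r _ => sq_nonneg _)
  have hsq : Integrable (fun r => (φ' r)^2) (volume.restrict (Set.Ici (0:ℝ))) :=
    hφ'.integrable_sq
  -- integrability on subintervals
  have hsubI : ∀ u v : ℝ, 0 ≤ u → IntegrableOn φ' (Set.Ioc u v) volume := by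
    intro u v hu
    have hle : volume.restrict (Set.Ioc u v) ≤ volume.restrict (Set.Ici (0:ℝ)) :=
      Measure.restrict_mono (fun r hr => le_trans hu (le_of_lt hr.1)) le_rfl
    have hml := hφ'.mono_measure hle
    haveI : IsFiniteMeasure (volume.restrict (Set.Ioc u v)) :=
      ⟨by rw [Measure.restrict_apply_univ]; exact measure_Ioc_lt_top⟩
    exact hml.integrable one_le_two
  have hsub2 : ∀ u v : ℝ, 0 ≤ u → IntegrableOn (fun r => (φ' r)^2) (Set.Ioc u v) volume := by
    intro u v hu
    have hle : volume.restrict (Set.Ioc u v) ≤ volume.restrict (Set.Ici (0:ℝ)) :=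
      Measure.restrict_mono (fun r hr => le_trans hu (le_of_lt hr.1)) le_rfl
    exact hsq.mono_measure hle
  have hII : ∀ v : ℝ, 0 ≤ v → IntervalIntegrable φ' volume 0 v := by
    intro v hv
    exact (intervalIntegrable_iff_integrableOn_Ioc_of_le hv).2 (hsubI 0 v le_rfl)
  have hy : 0 ≤ y := le_trans hx hxy
  have hdiff : φ y - φ x = ∫ s in x..y, φ' s := by
    rw [hrep y hy, hrep x hx]
    have := intervalIntegral.integral_interval_sub_left (hII y hy) (hII x hx)
    rw [← this]; ring
  rw [hdiff]
  have habs : |∫ s in x..y, φ' s| ≤ ∫ s in Set.Ioc x y, |φ' s| := by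
    rw [intervalIntegral.integral_of_le hxy]
    simpa [Real.norm_eq_abs] using
      norm_integral_le_integral_norm (μ := volume.restrict (Set.Ioc x y)) φ'
  have hIabs : IntegrableOn (fun r => |φ' r|) (Set.Ioc x y) volume := (hsubI x y hx).abs
  have hIocsub : ∫ r in Set.Ioc x y, (φ' r)^2 ≤ c2 := by
    refine setIntegral_mono_set hsq ?_ ?_
    · exact Filter.Eventually.of_forall (fun r => sq_nonneg _)
    · exact HasSubset.Subset.eventuallyLE (fun r hr => le_trans hx (le_of_lt hr.1))
  have key : ∀ lam : ℝ, 0 < lam →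
      (∫ s in Set.Ioc x y, |φ' s|) ≤ (lam * c2 + (y - x) / lam) / 2 := by
    intro lam hlam
    have hpt : ∀ s ∈ Set.Ioc x y, |φ' s| ≤ (lam * (φ' s)^2 + 1/lam) / 2 := by
      intro s _
      have h1 : 0 ≤ (lam * |φ' s| - 1)^2 / lam := div_nonneg (sq_nonneg _) hlam.le
      have he : (lam * |φ' s| - 1)^2 / lam = lam * |φ' s|^2 - 2*|φ' s| + 1/lam := by
        field_simp [sq_abs]; ring_nf
      rw [← sq_abs (φ' s)]
      rw [he] at h1
      linarith
    have hint_rhs : IntegrableOn (fun s => (lam * (φ' s)^2 + 1/lam) / 2) (Set.Ioc x y) volume := by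
      exact (((hsub2 x y hx).const_mul lam).add (integrableOn_const
        measure_Ioc_lt_top.ne)).div_const 2
    have := setIntegral_mono_on hIabs hint_rhs measurableSet_Ioc hpt
    refine le_trans this ?_
    rw [integral_div]
    rw [integral_add ((hsub2 x y hx).const_mul lam) (integrableOn_const measure_Ioc_lt_top.ne)]
    rw [integral_const_mul, setIntegral_const]
    have hvol : (volume (Set.Ioc x y)).toReal = y - x := by
      rw [Real.volume_Ioc, ENNReal.toReal_ofReal (by linarith)]
    rw [measureReal_def, hvol]
    have : lam * ∫ r in Set.Ioc x y, (φ' r)^2 ≤ lam * c2 :=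
      mul_le_mul_of_nonneg_left hIocsub (le_of_lt hlam)
    have h2 : (y - x) • (1/lam) = (y - x) / lam := by
      rw [smul_eq_mul]; ring
    rw [h2]
    linarith
  have hI0 : 0 ≤ ∫ s in Set.Ioc x y, |φ' s| :=
    setIntegral_nonneg measurableSet_Ioc (fun r _ => abs_nonneg _)
  have := amgm_sq_le hI0 hc2 (by linarith : (0:ℝ) ≤ y - x) key
  calc |∫ s in x..y, φ' s| ≤ ∫ s in Set.Ioc x y, |φ' s| := habs
    _ = Real.sqrt ((∫ s in Set.Ioc x y, |φ' s|)^2) := (Real.sqrt_sq hI0).symm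
    _ ≤ Real.sqrt (c2 * (y - x)) := Real.sqrt_le_sqrt this
    _ = Real.sqrt c2 * Real.sqrt (y - x) := Real.sqrt_mul hc2 _

lemma bdd_of_holder (ψ : ℝ → ℝ) (c K : ℝ) (hc : 0 ≤ c) (hK : 0 ≤ K)
    (hint : IntegrableOn (fun r => ψ r ^ 2) (Set.Ici (0:ℝ)) volume)
    (hKdef : ∫ r in Set.Ici (0:ℝ), ψ r ^ 2 ≤ K)
    (hold : ∀ x y : ℝ, 0 ≤ x → x ≤ y → |ψ y - ψ x| ≤ c * Real.sqrt (y - x)) :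
    ∀ x, 0 ≤ x → |ψ x| ≤ c + Real.sqrt K := by
  intro x hx
  rcases le_or_gt (|ψ x|) c with h | h
  · have := Real.sqrt_nonneg K; linarith
  · set M := |ψ x| with hM
    have hlow : ∀ y ∈ Set.Icc x (x+1), (M - c)^2 ≤ ψ y ^ 2 := by
      intro y hy
      have h1 : |ψ y - ψ x| ≤ c * Real.sqrt (y - x) := hold x y hx hy.1
      have h2 : Real.sqrt (y - x) ≤ 1 := by
        rw [show (1:ℝ) = Real.sqrt 1 by simp]
        exact Real.sqrt_le_sqrt (by linarith [hy.2])
      have h3 : |ψ y - ψ x| ≤ c := by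
        calc |ψ y - ψ x| ≤ c * Real.sqrt (y - x) := h1
          _ ≤ c * 1 := mul_le_mul_of_nonneg_left h2 hc
          _ = c := mul_one c
      have h4 : M - c ≤ |ψ y| := by
        have := abs_sub_abs_le_abs_sub (ψ x) (ψ y)
        rw [abs_sub_comm] at this
        linarith
      calc (M - c)^2 ≤ |ψ y|^2 := by
            apply pow_le_pow_left₀ (by linarith) h4
        _ = ψ y ^ 2 := sq_abs _
    have hsub : IntegrableOn (fun r => ψ r ^ 2) (Set.Icc x (x+1)) volume :=
      hint.mono_set (fun r hr => le_trans hx hr.1)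
    have hlb : (M - c)^2 * (volume (Set.Icc x (x+1))).toReal ≤ ∫ r in Set.Icc x (x+1), ψ r ^ 2 :=
      by have h := setIntegral_ge_of_const_le measurableSet_Icc (by simp) hlow hsub
         rwa [smul_eq_mul, mul_comm, measureReal_def] at h
    have hvol : (volume (Set.Icc x (x+1))).toReal = 1 := by
      rw [Real.volume_Icc]; norm_num
    rw [hvol, mul_one] at hlb
    have hub : ∫ r in Set.Icc x (x+1), ψ r ^ 2 ≤ ∫ r in Set.Ici (0:ℝ), ψ r ^ 2 := by
      refine setIntegral_mono_set hint ?_ ?_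
      · exact Filter.Eventually.of_forall (fun r => sq_nonneg _)
      · exact HasSubset.Subset.eventuallyLE (fun r hr => le_trans hx hr.1)
    have hfin : (M - c)^2 ≤ K := by linarith
    have : M - c ≤ Real.sqrt K := by
      have h5 : Real.sqrt ((M - c)^2) ≤ Real.sqrt K := Real.sqrt_le_sqrt hfin
      rwa [Real.sqrt_sq (by linarith : (0:ℝ) ≤ M - c)] at h5
    linarith

lemma integrable_of_ae_bdd {Ω : Type} [MeasurableSpace Ω] {P : Measure Ω} [IsProbabilityMeasure P]
    {f : Ω → ℝ} (hm : AEStronglyMeasurable f P) {K : ℝ} (h : ∀ᵐ ω ∂P, |f ω| ≤ K) :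
    Integrable f P :=
  Integrable.mono' (integrable_const K) hm (by simpa [Real.norm_eq_abs] using h)

lemma abs_integral_le_of_ae_bdd {Ω : Type} [MeasurableSpace Ω] {P : Measure Ω}
    [IsProbabilityMeasure P] {f : Ω → ℝ} (hm : AEStronglyMeasurable f P) {K : ℝ}
    (h : ∀ᵐ ω ∂P, |f ω| ≤ K) : |∫ ω, f ω ∂P| ≤ K := by
  have hint : Integrable f P := integrable_of_ae_bdd hm h
  have h1 : |∫ ω, f ω ∂P| ≤ ∫ ω, |f ω| ∂P := by
    simpa [Real.norm_eq_abs] using norm_integral_le_integral_norm (μ := P) f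
  have h2 : ∫ ω, |f ω| ∂P ≤ ∫ _ω, K ∂P := integral_mono_ae hint.abs (integrable_const K) h
  have h3 : ∫ _ω, K ∂P = K := by simp
  linarith

lemma abs_mul_le_of_abs_le {x y p q : ℝ} (hx : |x| ≤ p) (hy : |y| ≤ q) : |x*y| ≤ p*q := by
  rw [abs_mul]
  exact mul_le_mul hx hy (abs_nonneg _) (le_trans (abs_nonneg _) hx)

lemma abs_sq_le_of_abs_le {x p : ℝ} (hx : |x| ≤ p) : |x^2| ≤ p^2 := by
  rw [abs_pow]
  exact pow_le_pow_left₀ (abs_nonneg _) hx 2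

lemma fourth_moment_rec {Ω : Type} [MeasurableSpace Ω] (P : Measure Ω) [IsProbabilityMeasure P]
    (X Y : ℕ → Ω → ℝ) (a b : ℝ) (ha : 0 ≤ a) (hb : 0 ≤ b)
    (hXm : ∀ j, Measurable (X j)) (hYm : ∀ j, Measurable (Y j))
    (hXa : ∀ j, ∀ᵐ ω ∂P, |X j ω| ≤ a) (hYb : ∀ j, ∀ᵐ ω ∂P, |Y j ω| ≤ b)
    (hX0 : ∀ j, ∫ ω, X j ω ∂P = 0) (hY0 : ∀ j, ∫ ω, Y j ω ∂P = 0)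
    (hind : ∀ m : ℕ, IndepFun
      (fun ω => ((∑ j ∈ Finset.range m, X j ω), (∑ j ∈ Finset.range m, Y j ω)))
      (fun ω => (X m ω, Y m ω)) P) :
    ∀ n : ℕ,
      (∫ ω, (∑ j ∈ Finset.range n, X j ω)^2 * (∑ j ∈ Finset.range n, Y j ω)^2 ∂P
          ≤ 3 * (n:ℝ)^2 * (a^2 * b^2))
      ∧ (∫ ω, (∑ j ∈ Finset.range n, X j ω)^2 ∂P ≤ n * a^2)
      ∧ (∫ ω, (∑ j ∈ Finset.range n, Y j ω)^2 ∂P ≤ n * b^2)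
      ∧ |∫ ω, (∑ j ∈ Finset.range n, X j ω) * (∑ j ∈ Finset.range n, Y j ω) ∂P| ≤ n * (a*b) := by
  intro n
  induction n with
  | zero => simp
  | succ m ih =>
    obtain ⟨ihQ, ihA, ihB, ihD⟩ := ih
    simp only [Finset.sum_range_succ]
    set U : Ω → ℝ := fun ω => ∑ j ∈ Finset.range m, X j ω with hUdef
    set V : Ω → ℝ := fun ω => ∑ j ∈ Finset.range m, Y j ω with hVdef
    -- measurability
    have hUm : Measurable U := Finset.measurable_sum _ (fun j _ => hXm j)
    have hVm : Measurable V := Finset.measurable_sum _ (fun j _ => hYm j)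
    -- a.e. bounds
    have hUa : ∀ᵐ ω ∂P, |U ω| ≤ m * a := by
      have h1 : ∀ᵐ ω ∂P, ∀ j ∈ Finset.range m, |X j ω| ≤ a :=
        (ae_ball_iff (Finset.range m).countable_toSet).2 (fun j _ => hXa j)
      filter_upwards [h1] with ω hω
      calc |U ω| ≤ ∑ j ∈ Finset.range m, |X j ω| := Finset.abs_sum_le_sum_abs _ _
        _ ≤ ∑ _j ∈ Finset.range m, a := Finset.sum_le_sum hω
        _ = m * a := by simp [Finset.sum_const, nsmul_eq_mul]
    have hVb : ∀ᵐ ω ∂P, |V ω| ≤ m * b := by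
      have h1 : ∀ᵐ ω ∂P, ∀ j ∈ Finset.range m, |Y j ω| ≤ b :=
        (ae_ball_iff (Finset.range m).countable_toSet).2 (fun j _ => hYb j)
      filter_upwards [h1] with ω hω
      calc |V ω| ≤ ∑ j ∈ Finset.range m, |Y j ω| := Finset.abs_sum_le_sum_abs _ _
        _ ≤ ∑ _j ∈ Finset.range m, b := Finset.sum_le_sum hω
        _ = m * b := by simp [Finset.sum_const, nsmul_eq_mul]
    have hma : 0 ≤ (m:ℝ) * a := mul_nonneg (Nat.cast_nonneg m) ha
    have hmb : 0 ≤ (m:ℝ) * b := mul_nonneg (Nat.cast_nonneg m) hb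
    -- integrability helper
    have hintb : ∀ (f : Ω → ℝ) (K : ℝ), Measurable f → (∀ᵐ ω ∂P, |f ω| ≤ K) → Integrable f P :=
      fun f K hf hb' => integrable_of_ae_bdd hf.aestronglyMeasurable hb'
    -- centered sums
    have hintX : ∀ j, Integrable (X j) P := fun j => hintb _ a (hXm j) (hXa j)
    have hintY : ∀ j, Integrable (Y j) P := fun j => hintb _ b (hYm j) (hYb j)
    have hU0 : ∫ ω, U ω ∂P = 0 := by
      rw [hUdef, integral_finset_sum _ (fun j _ => hintX j)]
      simp [hX0]
    have hV0 : ∫ ω, V ω ∂P = 0 := by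
      rw [hVdef, integral_finset_sum _ (fun j _ => hintY j)]
      simp [hY0]
    -- factorization helper
    have key : ∀ (F G : ℝ × ℝ → ℝ) (KF KG : ℝ), Measurable F → Measurable G →
        (∀ᵐ ω ∂P, |F (U ω, V ω)| ≤ KF) → (∀ᵐ ω ∂P, |G (X m ω, Y m ω)| ≤ KG) →
        ∫ ω, F (U ω, V ω) * G (X m ω, Y m ω) ∂P
          = (∫ ω, F (U ω, V ω) ∂P) * ∫ ω, G (X m ω, Y m ω) ∂P := by
      intro F G KF KG hF hG hbF hbG
      have hIF : IndepFun (fun ω => F (U ω, V ω)) (fun ω => G (X m ω, Y m ω)) P :=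
        (hind m).comp hF hG
      exact hIF.integral_fun_mul_eq_mul_integral
        (hintb _ KF (hF.comp (hUm.prodMk hVm)) hbF).aestronglyMeasurable
        (hintb _ KG (hG.comp ((hXm m).prodMk (hYm m))) hbG).aestronglyMeasurable
    -- Z-side integral facts
    have hX2 : |∫ ω, (X m ω)^2 ∂P| ≤ a^2 :=
      abs_integral_le_of_ae_bdd ((hXm m).pow_const 2).aestronglyMeasurable
        ((hXa m).mono fun ω h => abs_sq_le_of_abs_le h)
    have hY2 : |∫ ω, (Y m ω)^2 ∂P| ≤ b^2 :=
      abs_integral_le_of_ae_bdd ((hYm m).pow_const 2).aestronglyMeasurable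
        ((hYb m).mono fun ω h => abs_sq_le_of_abs_le h)
    have hXY : |∫ ω, X m ω * Y m ω ∂P| ≤ a*b := by
      refine abs_integral_le_of_ae_bdd ((hXm m).mul (hYm m)).aestronglyMeasurable ?_
      filter_upwards [hXa m, hYb m] with ω h1 h2 using abs_mul_le_of_abs_le h1 h2
    have hX2Y2 : |∫ ω, (X m ω)^2 * (Y m ω)^2 ∂P| ≤ a^2*b^2 := by
      refine abs_integral_le_of_ae_bdd
        (((hXm m).pow_const 2).mul ((hYm m).pow_const 2)).aestronglyMeasurable ?_
      filter_upwards [hXa m, hYb m] with ω h1 h2 using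
        abs_mul_le_of_abs_le (abs_sq_le_of_abs_le h1) (abs_sq_le_of_abs_le h2)
    -- nonnegativity of second moments
    have hAnn : 0 ≤ ∫ ω, U ω^2 ∂P := integral_nonneg (fun ω => sq_nonneg _)
    have hBnn : 0 ≤ ∫ ω, V ω^2 ∂P := integral_nonneg (fun ω => sq_nonneg _)
    have hX2nn : 0 ≤ ∫ ω, (X m ω)^2 ∂P := integral_nonneg (fun ω => sq_nonneg _)
    have hY2nn : 0 ≤ ∫ ω, (Y m ω)^2 ∂P := integral_nonneg (fun ω => sq_nonneg _)
    -- factorized cross terms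
    have hUX : ∫ ω, U ω * X m ω ∂P = 0 := by
      have h := key Prod.fst Prod.fst (m*a) a measurable_fst measurable_fst hUa (hXa m)
      simp only [] at h
      rw [h, hU0, zero_mul]
    have hUY : ∫ ω, U ω * Y m ω ∂P = 0 := by
      have h := key Prod.fst Prod.snd (m*a) b measurable_fst measurable_snd hUa (hYb m)
      simp only [] at h
      rw [h, hU0, zero_mul]
    have hVX : ∫ ω, V ω * X m ω ∂P = 0 := by
      have h := key Prod.snd Prod.fst (m*b) a measurable_snd measurable_fst hVb (hXa m)
      simp only [] at h
      rw [h, hV0, zero_mul]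
    have hU2Y : ∫ ω, (U ω^2*V ω) * Y m ω ∂P = 0 := by
      have h := key (fun p => p.1^2*p.2) Prod.snd ((m*a)^2*(m*b)) b
        ((measurable_fst.pow_const 2).mul measurable_snd) measurable_snd ?_ (hYb m)
      · rw [h, hY0 m, mul_zero]
      · filter_upwards [hUa, hVb] with ω h1 h2 using
          abs_mul_le_of_abs_le (abs_sq_le_of_abs_le h1) h2
    have hUV2X : ∫ ω, (U ω*V ω^2) * X m ω ∂P = 0 := by
      have h := key (fun p => p.1*p.2^2) Prod.fst ((m*a)*(m*b)^2) a
        (measurable_fst.mul (measurable_snd.pow_const 2)) measurable_fst ?_ (hXa m)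
      · rw [h, hX0 m, mul_zero]
      · filter_upwards [hUa, hVb] with ω h1 h2 using
          abs_mul_le_of_abs_le h1 (abs_sq_le_of_abs_le h2)
    have hUVXY : ∫ ω, (U ω*V ω) * (X m ω*Y m ω) ∂P
        = (∫ ω, U ω*V ω ∂P) * ∫ ω, X m ω*Y m ω ∂P := by
      have h := key (fun p => p.1*p.2) (fun p => p.1*p.2) ((m*a)*(m*b)) (a*b)
        (measurable_fst.mul measurable_snd) (measurable_fst.mul measurable_snd) ?_ ?_
      · exact h
      · filter_upwards [hUa, hVb] with ω h1 h2 using abs_mul_le_of_abs_le h1 h2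
      · filter_upwards [hXa m, hYb m] with ω h1 h2 using abs_mul_le_of_abs_le h1 h2
    have hUXY2 : ∫ ω, U ω * (X m ω*Y m ω^2) ∂P = 0 := by
      have h := key Prod.fst (fun p => p.1*p.2^2) (m*a) (a*b^2)
        measurable_fst (measurable_fst.mul (measurable_snd.pow_const 2)) hUa ?_
      · rw [h, hU0, zero_mul]
      · filter_upwards [hXa m, hYb m] with ω h1 h2 using
          abs_mul_le_of_abs_le h1 (abs_sq_le_of_abs_le h2)
    have hVX2Y : ∫ ω, V ω * (X m ω^2*Y m ω) ∂P = 0 := by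
      have h := key Prod.snd (fun p => p.1^2*p.2) (m*b) (a^2*b)
        measurable_snd ((measurable_fst.pow_const 2).mul measurable_snd) hVb ?_
      · rw [h, hV0, zero_mul]
      · filter_upwards [hXa m, hYb m] with ω h1 h2 using
          abs_mul_le_of_abs_le (abs_sq_le_of_abs_le h1) h2
    have hU2Y2 : ∫ ω, U ω^2 * Y m ω^2 ∂P = (∫ ω, U ω^2 ∂P) * ∫ ω, (Y m ω)^2 ∂P := by
      have h := key (fun p => p.1^2) (fun p => p.2^2) ((m*a)^2) (b^2)
        (measurable_fst.pow_const 2) (measurable_snd.pow_const 2) ?_ ?_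
      · exact h
      · filter_upwards [hUa] with ω h1 using abs_sq_le_of_abs_le h1
      · filter_upwards [hYb m] with ω h2 using abs_sq_le_of_abs_le h2
    have hV2X2 : ∫ ω, V ω^2 * X m ω^2 ∂P = (∫ ω, V ω^2 ∂P) * ∫ ω, (X m ω)^2 ∂P := by
      have h := key (fun p => p.2^2) (fun p => p.1^2) ((m*b)^2) (a^2)
        (measurable_snd.pow_const 2) (measurable_fst.pow_const 2) ?_ ?_
      · exact h
      · filter_upwards [hVb] with ω h1 using abs_sq_le_of_abs_le h1
      · filter_upwards [hXa m] with ω h2 using abs_sq_le_of_abs_le h2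
    -- integrability of all terms
    have iU2 : Integrable (fun ω => U ω^2) P :=
      hintb _ ((m*a)^2) (hUm.pow_const 2) (hUa.mono fun ω h => abs_sq_le_of_abs_le h)
    have iV2 : Integrable (fun ω => V ω^2) P :=
      hintb _ ((m*b)^2) (hVm.pow_const 2) (hVb.mono fun ω h => abs_sq_le_of_abs_le h)
    have iX2 : Integrable (fun ω => (X m ω)^2) P :=
      hintb _ (a^2) ((hXm m).pow_const 2) ((hXa m).mono fun ω h => abs_sq_le_of_abs_le h)
    have iY2 : Integrable (fun ω => (Y m ω)^2) P :=
      hintb _ (b^2) ((hYm m).pow_const 2) ((hYb m).mono fun ω h => abs_sq_le_of_abs_le h)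
    have iUX : Integrable (fun ω => U ω * X m ω) P := by
      refine hintb _ ((m*a)*a) (hUm.mul (hXm m)) ?_
      filter_upwards [hUa, hXa m] with ω h1 h2 using abs_mul_le_of_abs_le h1 h2
    have iUY : Integrable (fun ω => U ω * Y m ω) P := by
      refine hintb _ ((m*a)*b) (hUm.mul (hYm m)) ?_
      filter_upwards [hUa, hYb m] with ω h1 h2 using abs_mul_le_of_abs_le h1 h2
    have iVX : Integrable (fun ω => V ω * X m ω) P := by
      refine hintb _ ((m*b)*a) (hVm.mul (hXm m)) ?_
      filter_upwards [hVb, hXa m] with ω h1 h2 using abs_mul_le_of_abs_le h1 h2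
    have iXY : Integrable (fun ω => X m ω * Y m ω) P := by
      refine hintb _ (a*b) ((hXm m).mul (hYm m)) ?_
      filter_upwards [hXa m, hYb m] with ω h1 h2 using abs_mul_le_of_abs_le h1 h2
    have iUV : Integrable (fun ω => U ω * V ω) P := by
      refine hintb _ ((m*a)*(m*b)) (hUm.mul hVm) ?_
      filter_upwards [hUa, hVb] with ω h1 h2 using abs_mul_le_of_abs_le h1 h2
    -- second moments of sums
    have hA' : ∫ ω, (U ω + X m ω)^2 ∂P ≤ (m+1 : ℝ) * a^2 := by
      have e : ∀ ω, (U ω + X m ω)^2 = U ω^2 + (2*(U ω * X m ω) + (X m ω)^2) :=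
        fun ω => by ring
      have it1 : Integrable (fun ω => 2*(U ω * X m ω)) P := iUX.const_mul 2
      have it2 : Integrable (fun ω => 2*(U ω * X m ω) + (X m ω)^2) P := it1.add iX2
      simp_rw [e]
      rw [integral_add iU2 it2, integral_add it1 iX2, integral_const_mul, hUX]
      have := abs_le.1 hX2
      linarith [ihA]
    have hB' : ∫ ω, (V ω + Y m ω)^2 ∂P ≤ (m+1 : ℝ) * b^2 := by
      have e : ∀ ω, (V ω + Y m ω)^2 = V ω^2 + (2*(V ω * Y m ω) + (Y m ω)^2) :=
        fun ω => by ring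
      have hVY : ∫ ω, V ω * Y m ω ∂P = 0 := by
        have h := key Prod.snd Prod.snd (m*b) b measurable_snd measurable_snd hVb (hYb m)
        simp only [] at h
        rw [h, hV0, zero_mul]
      have iVY : Integrable (fun ω => V ω * Y m ω) P := by
        refine hintb _ ((m*b)*b) (hVm.mul (hYm m)) ?_
        filter_upwards [hVb, hYb m] with ω h1 h2 using abs_mul_le_of_abs_le h1 h2
      have it1 : Integrable (fun ω => 2*(V ω * Y m ω)) P := iVY.const_mul 2
      have it2 : Integrable (fun ω => 2*(V ω * Y m ω) + (Y m ω)^2) P := it1.add iY2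
      simp_rw [e]
      rw [integral_add iV2 it2, integral_add it1 iY2, integral_const_mul, hVY]
      have := abs_le.1 hY2
      linarith [ihB]
    have hD' : |∫ ω, (U ω + X m ω) * (V ω + Y m ω) ∂P| ≤ (m+1 : ℝ) * (a*b) := by
      have e : ∀ ω, (U ω + X m ω) * (V ω + Y m ω)
          = U ω*V ω + (U ω*Y m ω + (V ω*X m ω + X m ω*Y m ω)) := fun ω => by ring
      have it1 : Integrable (fun ω => V ω*X m ω + X m ω*Y m ω) P := iVX.add iXY
      have it2 : Integrable (fun ω => U ω*Y m ω + (V ω*X m ω + X m ω*Y m ω)) P := iUY.add it1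
      simp_rw [e]
      rw [integral_add iUV it2, integral_add iUY it1, integral_add iVX iXY, hUY, hVX]
      have ihD2 : |∫ ω, U ω * V ω ∂P| ≤ (m:ℝ)*(a*b) := ihD
      calc |(∫ ω, U ω * V ω ∂P) + (0 + (0 + ∫ ω, X m ω * Y m ω ∂P))|
          = |(∫ ω, U ω * V ω ∂P) + ∫ ω, X m ω * Y m ω ∂P| := by ring_nf
        _ ≤ |∫ ω, U ω * V ω ∂P| + |∫ ω, X m ω * Y m ω ∂P| := abs_add_le _ _
        _ ≤ (m:ℝ)*(a*b) + a*b := add_le_add ihD2 hXY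
        _ = ((m:ℝ)+1) * (a*b) := by ring
    refine ⟨?_, by push_cast; exact hA', by push_cast; exact hB', by push_cast; exact hD'⟩
    -- the fourth moment
    have e : ∀ ω, (U ω + X m ω)^2 * (V ω + Y m ω)^2
        = U ω^2*V ω^2 + (2*((U ω^2*V ω)*Y m ω) + (U ω^2*Y m ω^2 + (2*((U ω*V ω^2)*X m ω)
          + (4*((U ω*V ω)*(X m ω*Y m ω)) + (2*(U ω*(X m ω*Y m ω^2)) + (V ω^2*X m ω^2
          + (2*(V ω*(X m ω^2*Y m ω)) + (X m ω)^2*(Y m ω)^2))))))) := fun ω => by ring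
    have i1 : Integrable (fun ω => U ω^2*V ω^2) P := by
      refine hintb _ ((m*a)^2*(m*b)^2) ((hUm.pow_const 2).mul (hVm.pow_const 2)) ?_
      filter_upwards [hUa, hVb] with ω h1 h2 using
        abs_mul_le_of_abs_le (abs_sq_le_of_abs_le h1) (abs_sq_le_of_abs_le h2)
    have i2 : Integrable (fun ω => 2*((U ω^2*V ω)*Y m ω)) P := by
      refine Integrable.const_mul ?_ 2
      refine hintb _ (((m*a)^2*(m*b))*b)
        (((hUm.pow_const 2).mul hVm).mul (hYm m)) ?_
      filter_upwards [hUa, hVb, hYb m] with ω h1 h2 h3 using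
        abs_mul_le_of_abs_le (abs_mul_le_of_abs_le (abs_sq_le_of_abs_le h1) h2) h3
    have i3 : Integrable (fun ω => U ω^2*Y m ω^2) P := by
      refine hintb _ ((m*a)^2*b^2) ((hUm.pow_const 2).mul ((hYm m).pow_const 2)) ?_
      filter_upwards [hUa, hYb m] with ω h1 h2 using
        abs_mul_le_of_abs_le (abs_sq_le_of_abs_le h1) (abs_sq_le_of_abs_le h2)
    have i4 : Integrable (fun ω => 2*((U ω*V ω^2)*X m ω)) P := by
      refine Integrable.const_mul ?_ 2
      refine hintb _ (((m*a)*(m*b)^2)*a)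
        ((hUm.mul (hVm.pow_const 2)).mul (hXm m)) ?_
      filter_upwards [hUa, hVb, hXa m] with ω h1 h2 h3 using
        abs_mul_le_of_abs_le (abs_mul_le_of_abs_le h1 (abs_sq_le_of_abs_le h2)) h3
    have i5 : Integrable (fun ω => 4*((U ω*V ω)*(X m ω*Y m ω))) P := by
      refine Integrable.const_mul ?_ 4
      refine hintb _ (((m*a)*(m*b))*(a*b))
        ((hUm.mul hVm).mul ((hXm m).mul (hYm m))) ?_
      filter_upwards [hUa, hVb, hXa m, hYb m] with ω h1 h2 h3 h4 using
        abs_mul_le_of_abs_le (abs_mul_le_of_abs_le h1 h2) (abs_mul_le_of_abs_le h3 h4)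
    have i6 : Integrable (fun ω => 2*(U ω*(X m ω*Y m ω^2))) P := by
      refine Integrable.const_mul ?_ 2
      refine hintb _ ((m*a)*(a*b^2)) (hUm.mul ((hXm m).mul ((hYm m).pow_const 2))) ?_
      filter_upwards [hUa, hXa m, hYb m] with ω h1 h2 h3 using
        abs_mul_le_of_abs_le h1 (abs_mul_le_of_abs_le h2 (abs_sq_le_of_abs_le h3))
    have i7 : Integrable (fun ω => V ω^2*X m ω^2) P := by
      refine hintb _ ((m*b)^2*a^2) ((hVm.pow_const 2).mul ((hXm m).pow_const 2)) ?_
      filter_upwards [hVb, hXa m] with ω h1 h2 using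
        abs_mul_le_of_abs_le (abs_sq_le_of_abs_le h1) (abs_sq_le_of_abs_le h2)
    have i8 : Integrable (fun ω => 2*(V ω*(X m ω^2*Y m ω))) P := by
      refine Integrable.const_mul ?_ 2
      refine hintb _ ((m*b)*(a^2*b)) (hVm.mul (((hXm m).pow_const 2).mul (hYm m))) ?_
      filter_upwards [hVb, hXa m, hYb m] with ω h1 h2 h3 using
        abs_mul_le_of_abs_le h1 (abs_mul_le_of_abs_le (abs_sq_le_of_abs_le h2) h3)
    have i9 : Integrable (fun ω => (X m ω)^2*(Y m ω)^2) P := by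
      refine hintb _ (a^2*b^2) (((hXm m).pow_const 2).mul ((hYm m).pow_const 2)) ?_
      filter_upwards [hXa m, hYb m] with ω h1 h2 using
        abs_mul_le_of_abs_le (abs_sq_le_of_abs_le h1) (abs_sq_le_of_abs_le h2)
    have s89 : Integrable (fun ω => 2*(V ω*(X m ω^2*Y m ω)) + (X m ω)^2*(Y m ω)^2) P := i8.add i9
    have s789 : Integrable (fun ω => V ω^2*X m ω^2
        + (2*(V ω*(X m ω^2*Y m ω)) + (X m ω)^2*(Y m ω)^2)) P := i7.add s89
    have s6789 : Integrable (fun ω => 2*(U ω*(X m ω*Y m ω^2)) + (V ω^2*X m ω^2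
        + (2*(V ω*(X m ω^2*Y m ω)) + (X m ω)^2*(Y m ω)^2))) P := i6.add s789
    have s5to9 : Integrable (fun ω => 4*((U ω*V ω)*(X m ω*Y m ω)) + (2*(U ω*(X m ω*Y m ω^2))
        + (V ω^2*X m ω^2 + (2*(V ω*(X m ω^2*Y m ω)) + (X m ω)^2*(Y m ω)^2)))) P := i5.add s6789
    have s4to9 : Integrable (fun ω => 2*((U ω*V ω^2)*X m ω) + (4*((U ω*V ω)*(X m ω*Y m ω))
        + (2*(U ω*(X m ω*Y m ω^2)) + (V ω^2*X m ω^2 + (2*(V ω*(X m ω^2*Y m ω))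
        + (X m ω)^2*(Y m ω)^2))))) P := i4.add s5to9
    have s3to9 : Integrable (fun ω => U ω^2*Y m ω^2 + (2*((U ω*V ω^2)*X m ω)
        + (4*((U ω*V ω)*(X m ω*Y m ω)) + (2*(U ω*(X m ω*Y m ω^2)) + (V ω^2*X m ω^2
        + (2*(V ω*(X m ω^2*Y m ω)) + (X m ω)^2*(Y m ω)^2)))))) P := i3.add s4to9
    have s2to9 : Integrable (fun ω => 2*((U ω^2*V ω)*Y m ω) + (U ω^2*Y m ω^2
        + (2*((U ω*V ω^2)*X m ω) + (4*((U ω*V ω)*(X m ω*Y m ω)) + (2*(U ω*(X m ω*Y m ω^2))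
        + (V ω^2*X m ω^2 + (2*(V ω*(X m ω^2*Y m ω)) + (X m ω)^2*(Y m ω)^2))))))) P := i2.add s3to9
    show ∫ ω, (U ω + X m ω)^2 * (V ω + Y m ω)^2 ∂P ≤ _
    simp_rw [e]
    rw [integral_add i1 s2to9, integral_add i2 s3to9, integral_add i3 s4to9,
      integral_add i4 s5to9, integral_add i5 s6789, integral_add i6 s789,
      integral_add i7 s89, integral_add i8 i9,
      integral_const_mul 2 (fun ω => (U ω^2*V ω)*Y m ω),
      integral_const_mul 2 (fun ω => (U ω*V ω^2)*X m ω),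
      integral_const_mul 4 (fun ω => (U ω*V ω)*(X m ω*Y m ω)),
      integral_const_mul 2 (fun ω => U ω*(X m ω*Y m ω^2)),
      integral_const_mul 2 (fun ω => V ω*(X m ω^2*Y m ω)),
      hU2Y, hUV2X, hUVXY, hUXY2, hVX2Y, hU2Y2, hV2X2]
    have ihQ2 : ∫ ω, U ω^2*V ω^2 ∂P ≤ 3*(m:ℝ)^2*(a^2*b^2) := ihQ
    have ihA2 : ∫ ω, U ω^2 ∂P ≤ (m:ℝ)*a^2 := ihA
    have ihB2 : ∫ ω, V ω^2 ∂P ≤ (m:ℝ)*b^2 := ihB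
    have ihD2 : |∫ ω, U ω*V ω ∂P| ≤ (m:ℝ)*(a*b) := ihD
    have e3 : (∫ ω, U ω^2 ∂P) * (∫ ω, (Y m ω)^2 ∂P) ≤ ((m:ℝ)*a^2)*b^2 :=
      mul_le_mul ihA2 (abs_le.1 hY2).2 hY2nn (by positivity)
    have e7 : (∫ ω, V ω^2 ∂P) * (∫ ω, (X m ω)^2 ∂P) ≤ ((m:ℝ)*b^2)*a^2 :=
      mul_le_mul ihB2 (abs_le.1 hX2).2 hX2nn (by positivity)
    have e5 : (∫ ω, U ω*V ω ∂P) * (∫ ω, X m ω*Y m ω ∂P) ≤ ((m:ℝ)*(a*b))*(a*b) :=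
      le_trans (le_abs_self _) (abs_mul_le_of_abs_le ihD2 hXY)
    have e9 : ∫ ω, (X m ω)^2*(Y m ω)^2 ∂P ≤ a^2*b^2 := (abs_le.1 hX2Y2).2
    have hm0 : (0:ℝ) ≤ (m:ℝ) := Nat.cast_nonneg m
    have hab : (0:ℝ) ≤ a^2*b^2 := by positivity
    have hmab : (0:ℝ) ≤ (m:ℝ)*(a^2*b^2) := by positivity
    have e3' : (∫ ω, U ω^2 ∂P) * (∫ ω, (Y m ω)^2 ∂P) ≤ (m:ℝ)*(a^2*b^2) :=
      le_trans e3 (le_of_eq (by ring))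
    have e7' : (∫ ω, V ω^2 ∂P) * (∫ ω, (X m ω)^2 ∂P) ≤ (m:ℝ)*(a^2*b^2) :=
      le_trans e7 (le_of_eq (by ring))
    have e5' : (∫ ω, U ω*V ω ∂P) * (∫ ω, X m ω*Y m ω ∂P) ≤ (m:ℝ)*(a^2*b^2) :=
      le_trans e5 (le_of_eq (by ring))
    have hexp : 3*((m:ℝ)+1)^2*(a^2*b^2)
        = 3*(m:ℝ)^2*(a^2*b^2) + 6*((m:ℝ)*(a^2*b^2)) + 3*(a^2*b^2) := by ring
    push_cast
    rw [hexp]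
    linarith [ihQ2, e3', e5', e7', e9, hab, hmab]

set_option maxHeartbeats 2000000 in
/-- **Joint increment moment bound for the CLT-scaled initial age process.**
Let `(τ_j)` be i.i.d. with law `ρ` on `ℝ₊`, `φ ∈ H¹(ℝ₊)`,
`Z_{j,t} = φ(τ_j + t)` and `Z̄_{j,t} = Z_{j,t} - E[Z_{j,t}]`.  There is a
universal constant `C` such that for all `0 ≤ t₁ < t < t₂` and `n ≤ N`,
`N⁻² E[(∑_{j≤n}(Z̄_{j,t} - Z̄_{j,t₁}))² (∑_{j≤n}(Z̄_{j,t₂} - Z̄_{j,t}))²]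
  ≤ C c_φ⁴ (t₂ - t₁)²` with `c_φ² = ∫₀^∞ |φ'|²`. -/
theorem initial_age_fourth_moment_bound :
    ∃ C : ℝ, 0 < C ∧
    ∀ {Ω : Type} [MeasurableSpace Ω] (P : Measure Ω), IsProbabilityMeasure P →
    ∀ (ρ : Measure ℝ) (_ : IsProbabilityMeasure ρ), ρ (Set.Iio 0) = 0 →
    ∀ (τ : ℕ → Ω → ℝ), (∀ j, Measurable (τ j)) →
      (∀ j, P.map (τ j) = ρ) →
      iIndepFun τ P →
    ∀ (φ φ' : ℝ → ℝ),
      MemLp φ 2 (volume.restrict (Set.Ici (0:ℝ))) →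
      MemLp φ' 2 (volume.restrict (Set.Ici (0:ℝ))) →
      (∀ t : ℝ, 0 ≤ t → φ t = φ 0 + ∫ s in (0:ℝ)..t, φ' s) →
    ∀ (N n : ℕ), n ≤ N → 1 ≤ N →
    ∀ t₁ t t₂ : ℝ, 0 ≤ t₁ → t₁ < t → t < t₂ →
      (1 / (N : ℝ) ^ 2) *
        ∫ ω, (∑ j ∈ Finset.range n,
            ((φ (τ j ω + t) - ∫ a, φ (a + t) ∂ρ)
              - (φ (τ j ω + t₁) - ∫ a, φ (a + t₁) ∂ρ))) ^ 2
          * (∑ j ∈ Finset.range n,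
            ((φ (τ j ω + t₂) - ∫ a, φ (a + t₂) ∂ρ)
              - (φ (τ j ω + t) - ∫ a, φ (a + t) ∂ρ))) ^ 2 ∂P
      ≤ C * (∫ r in Set.Ici (0:ℝ), (φ' r) ^ 2) ^ 2 * (t₂ - t₁) ^ 2 := by
  refine ⟨48, by norm_num, ?_⟩
  intro Ω _ P hP ρ hρprob hρ0 τ hτ hmap hiInd φ φ' hφ hφ' hrep N n hnN hN t₁ t t₂ ht₁ ht₁t htt₂
  haveI := hP
  haveI := hρprob
  -- basic positivity
  have ht : 0 ≤ t := le_trans ht₁ (le_of_lt ht₁t)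
  have ht₂ : 0 ≤ t₂ := le_trans ht (le_of_lt htt₂)
  set c2 : ℝ := ∫ r in Set.Ici (0:ℝ), (φ' r)^2 with hc2def
  have hc2 : 0 ≤ c2 := setIntegral_nonneg measurableSet_Ici (fun r _ => sq_nonneg _)
  set c : ℝ := Real.sqrt c2 with hcdef
  have hc : 0 ≤ c := Real.sqrt_nonneg _
  -- the continuous representative ψ
  set φ₀ : ℝ → ℝ := Set.indicator (Set.Ici (0:ℝ)) φ' with hφ₀def
  have hφ₀ : MemLp φ₀ 2 volume := (memLp_indicator_iff_restrict measurableSet_Ici).2 hφ'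
  have hφ₀loc : ∀ u v : ℝ, IntervalIntegrable φ₀ volume u v := by
    intro u v
    have h1 : MemLp φ₀ 2 (volume.restrict (Set.uIoc u v)) := hφ₀.restrict _
    haveI : IsFiniteMeasure (volume.restrict (Set.uIoc u v)) :=
      ⟨by rw [Measure.restrict_apply_univ]; exact measure_Ioc_lt_top⟩
    exact (intervalIntegrable_iff).2 (h1.integrable one_le_two)
  set ψ : ℝ → ℝ := fun x => φ 0 + ∫ s in (0:ℝ)..x, φ₀ s with hψdef
  have hψcont : Continuous ψ :=
    continuous_const.add (intervalIntegral.continuous_primitive hφ₀loc 0)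
  have hψm : Measurable ψ := hψcont.measurable
  have hψφ : ∀ x : ℝ, 0 ≤ x → ψ x = φ x := by
    intro x hx
    rw [hrep x hx]
    show φ 0 + ∫ s in (0:ℝ)..x, φ₀ s = φ 0 + ∫ s in (0:ℝ)..x, φ' s
    congr 1
    refine intervalIntegral.integral_congr ?_
    intro s hs
    rw [Set.uIcc_of_le hx] at hs
    exact Set.indicator_of_mem (Set.mem_Ici.2 hs.1) φ'
  -- Hölder bound for ψ
  have hHold : ∀ x y : ℝ, 0 ≤ x → x ≤ y → |ψ y - ψ x| ≤ c * Real.sqrt (y - x) := by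
    intro x y hx hxy
    rw [hψφ x hx, hψφ y (le_trans hx hxy)]
    exact holder_bound φ φ' hφ' hrep hx hxy
  -- boundedness of ψ on [0,∞)
  set K : ℝ := ∫ r in Set.Ici (0:ℝ), (φ r)^2 with hKdef
  have hK : 0 ≤ K := setIntegral_nonneg measurableSet_Ici (fun r _ => sq_nonneg _)
  have haeψφ : (fun r => φ r ^ 2) =ᵐ[volume.restrict (Set.Ici (0:ℝ))] (fun r => ψ r ^ 2) := by
    refine (ae_restrict_iff' measurableSet_Ici).2 (Filter.Eventually.of_forall ?_)
    intro x hx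
    show φ x ^ 2 = ψ x ^ 2
    rw [hψφ x hx]
  have hintψsq : IntegrableOn (fun r => ψ r ^ 2) (Set.Ici (0:ℝ)) volume :=
    hφ.integrable_sq.congr haeψφ
  have hψKle : ∫ r in Set.Ici (0:ℝ), ψ r ^ 2 ≤ K :=
    le_of_eq (integral_congr_ae haeψφ.symm)
  set B : ℝ := c + Real.sqrt K with hBdef
  have hψbdd : ∀ x : ℝ, 0 ≤ x → |ψ x| ≤ B :=
    bdd_of_holder ψ c K hc hK hintψsq hψKle hHold
  -- ρ-a.e. nonneg and τ-a.s. nonneg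
  have hρae : ∀ᵐ a ∂ρ, 0 ≤ a := by
    rw [ae_iff]
    have : {a : ℝ | ¬ 0 ≤ a} = Set.Iio 0 := by ext a; simp
    rw [this]; exact hρ0
  have hτae : ∀ j, ∀ᵐ ω ∂P, 0 ≤ τ j ω := by
    intro j
    rw [ae_iff]
    have h1 : {ω | ¬ 0 ≤ τ j ω} = τ j ⁻¹' (Set.Iio 0) := by ext ω; simp
    rw [h1, ← Measure.map_apply (hτ j) measurableSet_Iio, hmap j]
    exact hρ0
  -- integrability wrt ρ and equality of means
  have hρint : ∀ t' : ℝ, 0 ≤ t' → Integrable (fun a => ψ (a + t')) ρ := by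
    intro t' ht'
    refine integrable_of_ae_bdd (hψm.comp (measurable_id.add_const t')).aestronglyMeasurable
      (K := B) ?_
    filter_upwards [hρae] with a ha using hψbdd _ (by linarith)
  have hMeq : ∀ t' : ℝ, 0 ≤ t' → ∫ a, φ (a + t') ∂ρ = ∫ a, ψ (a + t') ∂ρ := by
    intro t' ht'
    refine integral_congr_ae ?_
    filter_upwards [hρae] with a ha
    rw [hψφ _ (by linarith)]
  have hEint : ∀ (j : ℕ) (t' : ℝ), 0 ≤ t' → Integrable (fun ω => ψ (τ j ω + t')) P := by
    intro j t' ht'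
    refine integrable_of_ae_bdd
      ((hψm.comp ((hτ j).add_const t')).aestronglyMeasurable) (K := B) ?_
    filter_upwards [hτae j] with ω hω using hψbdd _ (by linarith)
  have hE : ∀ (j : ℕ) (t' : ℝ), ∫ ω, ψ (τ j ω + t') ∂P = ∫ a, ψ (a + t') ∂ρ := by
    intro j t'
    have hm1 : Measurable (fun a : ℝ => ψ (a + t')) := hψm.comp (measurable_id.add_const t')
    rw [← hmap j, integral_map (hτ j).aemeasurable hm1.aestronglyMeasurable]
  -- centered increments
  set Mt₁ : ℝ := ∫ a, ψ (a + t₁) ∂ρ with hMt₁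
  set Mt : ℝ := ∫ a, ψ (a + t) ∂ρ with hMt
  set Mt₂ : ℝ := ∫ a, ψ (a + t₂) ∂ρ with hMt₂
  set Xf : ℕ → Ω → ℝ := fun j ω => (ψ (τ j ω + t) - Mt) - (ψ (τ j ω + t₁) - Mt₁) with hXfdef
  set Yf : ℕ → Ω → ℝ := fun j ω => (ψ (τ j ω + t₂) - Mt₂) - (ψ (τ j ω + t) - Mt) with hYfdef
  set aa : ℝ := 2 * (c * Real.sqrt (t - t₁)) with haadef
  set bb : ℝ := 2 * (c * Real.sqrt (t₂ - t)) with hbbdef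
  have haa : 0 ≤ aa := by positivity
  have hbb : 0 ≤ bb := by positivity
  have hXfm : ∀ j, Measurable (Xf j) := fun j =>
    ((hψm.comp ((hτ j).add_const t)).sub_const Mt).sub
      ((hψm.comp ((hτ j).add_const t₁)).sub_const Mt₁)
  have hYfm : ∀ j, Measurable (Yf j) := fun j =>
    ((hψm.comp ((hτ j).add_const t₂)).sub_const Mt₂).sub
      ((hψm.comp ((hτ j).add_const t)).sub_const Mt)
  have hMdiff : ∀ s' t' : ℝ, 0 ≤ s' → s' ≤ t' →
      |(∫ a, ψ (a + t') ∂ρ) - ∫ a, ψ (a + s') ∂ρ| ≤ c * Real.sqrt (t' - s') := by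
    intro s' t' hs' hst
    rw [← integral_sub (hρint t' (le_trans hs' hst)) (hρint s' hs')]
    have hm2 : Measurable (fun a : ℝ => ψ (a + t') - ψ (a + s')) :=
      (hψm.comp (measurable_id.add_const t')).sub (hψm.comp (measurable_id.add_const s'))
    refine abs_integral_le_of_ae_bdd hm2.aestronglyMeasurable ?_
    filter_upwards [hρae] with a ha
    have h := hHold (a + s') (a + t') (by linarith) (by linarith)
    have e : a + t' - (a + s') = t' - s' := by ring
    rwa [e] at h
  have hXfa : ∀ j, ∀ᵐ ω ∂P, |Xf j ω| ≤ aa := by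
    intro j
    filter_upwards [hτae j] with ω hω
    have h1 : |ψ (τ j ω + t) - ψ (τ j ω + t₁)| ≤ c * Real.sqrt (t - t₁) := by
      have h := hHold (τ j ω + t₁) (τ j ω + t) (by linarith) (by linarith)
      have e : τ j ω + t - (τ j ω + t₁) = t - t₁ := by ring
      rwa [e] at h
    have h2 : |Mt - Mt₁| ≤ c * Real.sqrt (t - t₁) := hMdiff t₁ t ht₁ (le_of_lt ht₁t)
    have e : Xf j ω = (ψ (τ j ω + t) - ψ (τ j ω + t₁)) - (Mt - Mt₁) := by
      show (ψ (τ j ω + t) - Mt) - (ψ (τ j ω + t₁) - Mt₁) = _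
      ring
    rw [e]
    calc |(ψ (τ j ω + t) - ψ (τ j ω + t₁)) - (Mt - Mt₁)|
        ≤ |ψ (τ j ω + t) - ψ (τ j ω + t₁)| + |Mt - Mt₁| := abs_sub _ _
      _ ≤ aa := by rw [haadef]; linarith
  have hYfb : ∀ j, ∀ᵐ ω ∂P, |Yf j ω| ≤ bb := by
    intro j
    filter_upwards [hτae j] with ω hω
    have h1 : |ψ (τ j ω + t₂) - ψ (τ j ω + t)| ≤ c * Real.sqrt (t₂ - t) := by
      have h := hHold (τ j ω + t) (τ j ω + t₂) (by linarith) (by linarith)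
      have e : τ j ω + t₂ - (τ j ω + t) = t₂ - t := by ring
      rwa [e] at h
    have h2 : |Mt₂ - Mt| ≤ c * Real.sqrt (t₂ - t) := hMdiff t t₂ ht (le_of_lt htt₂)
    have e : Yf j ω = (ψ (τ j ω + t₂) - ψ (τ j ω + t)) - (Mt₂ - Mt) := by
      show (ψ (τ j ω + t₂) - Mt₂) - (ψ (τ j ω + t) - Mt) = _
      ring
    rw [e]
    calc |(ψ (τ j ω + t₂) - ψ (τ j ω + t)) - (Mt₂ - Mt)|
        ≤ |ψ (τ j ω + t₂) - ψ (τ j ω + t)| + |Mt₂ - Mt| := abs_sub _ _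
      _ ≤ bb := by rw [hbbdef]; linarith
  have hXf0 : ∀ j, ∫ ω, Xf j ω ∂P = 0 := by
    intro j
    show ∫ ω, ((ψ (τ j ω + t) - Mt) - (ψ (τ j ω + t₁) - Mt₁)) ∂P = 0
    have ia : Integrable (fun ω => ψ (τ j ω + t) - Mt) P :=
      (hEint j t ht).sub (integrable_const Mt)
    have ib : Integrable (fun ω => ψ (τ j ω + t₁) - Mt₁) P :=
      (hEint j t₁ ht₁).sub (integrable_const Mt₁)
    rw [integral_sub ia ib, integral_sub (hEint j t ht) (integrable_const Mt),
      integral_sub (hEint j t₁ ht₁) (integrable_const Mt₁), hE j t, hE j t₁]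
    simp [hMt, hMt₁]
  have hYf0 : ∀ j, ∫ ω, Yf j ω ∂P = 0 := by
    intro j
    show ∫ ω, ((ψ (τ j ω + t₂) - Mt₂) - (ψ (τ j ω + t) - Mt)) ∂P = 0
    have ia : Integrable (fun ω => ψ (τ j ω + t₂) - Mt₂) P :=
      (hEint j t₂ ht₂).sub (integrable_const Mt₂)
    have ib : Integrable (fun ω => ψ (τ j ω + t) - Mt) P :=
      (hEint j t ht).sub (integrable_const Mt)
    rw [integral_sub ia ib, integral_sub (hEint j t₂ ht₂) (integrable_const Mt₂),
      integral_sub (hEint j t ht) (integrable_const Mt), hE j t₂, hE j t]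
    simp [hMt₂, hMt]
  -- independence of partial sums and increments
  have hind : ∀ m : ℕ, IndepFun
      (fun ω => ((∑ j ∈ Finset.range m, Xf j ω), (∑ j ∈ Finset.range m, Yf j ω)))
      (fun ω => (Xf m ω, Yf m ω)) P := by
    intro m
    have hdisj : Disjoint (Finset.range m) ({m} : Finset ℕ) := by
      simp [Finset.disjoint_singleton_right]
    have h := hiInd.indepFun_finset (Finset.range m) {m} hdisj hτ
    set F : ({x : ℕ // x ∈ Finset.range m} → ℝ) → ℝ × ℝ := fun v =>
      ((∑ i : {x : ℕ // x ∈ Finset.range m}, ((ψ (v i + t) - Mt) - (ψ (v i + t₁) - Mt₁))),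
       (∑ i : {x : ℕ // x ∈ Finset.range m}, ((ψ (v i + t₂) - Mt₂) - (ψ (v i + t) - Mt))))
      with hFdef
    set G : ({x : ℕ // x ∈ ({m} : Finset ℕ)} → ℝ) → ℝ × ℝ := fun v =>
      ((ψ (v ⟨m, Finset.mem_singleton_self m⟩ + t) - Mt)
          - (ψ (v ⟨m, Finset.mem_singleton_self m⟩ + t₁) - Mt₁),
       (ψ (v ⟨m, Finset.mem_singleton_self m⟩ + t₂) - Mt₂)
          - (ψ (v ⟨m, Finset.mem_singleton_self m⟩ + t) - Mt)) with hGdef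
    have hF : Measurable F := by
      refine Measurable.prodMk ?_ ?_ <;>
      · refine Finset.measurable_sum _ (fun i _ => ?_)
        exact ((hψm.comp ((measurable_pi_apply i).add_const _)).sub_const _).sub
          ((hψm.comp ((measurable_pi_apply i).add_const _)).sub_const _)
    have hG : Measurable G := by
      refine Measurable.prodMk ?_ ?_ <;>
      · exact ((hψm.comp ((measurable_pi_apply _).add_const _)).sub_const _).sub
          ((hψm.comp ((measurable_pi_apply _).add_const _)).sub_const _)
    have h2 := h.comp hF hG
    have e1 : (F ∘ fun ω (i : {x : ℕ // x ∈ Finset.range m}) => τ i ω)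
        = fun ω => ((∑ j ∈ Finset.range m, Xf j ω), (∑ j ∈ Finset.range m, Yf j ω)) := by
      funext ω
      exact congrArg₂ Prod.mk (Finset.sum_coe_sort (Finset.range m) (fun j => Xf j ω))
        (Finset.sum_coe_sort (Finset.range m) (fun j => Yf j ω))
    have e2 : (G ∘ fun ω (i : {x : ℕ // x ∈ ({m} : Finset ℕ)}) => τ i ω)
        = fun ω => (Xf m ω, Yf m ω) := rfl
    rw [e1, e2] at h2
    exact h2
  -- apply the fourth moment recursion
  have hrec := (fourth_moment_rec P Xf Yf aa bb haa hbb hXfm hYfm hXfa hYfb hXf0 hYf0 hind n).1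
  -- identify the integrand
  have hstmt : ∫ ω, (∑ j ∈ Finset.range n,
        ((φ (τ j ω + t) - ∫ a, φ (a + t) ∂ρ)
          - (φ (τ j ω + t₁) - ∫ a, φ (a + t₁) ∂ρ))) ^ 2
      * (∑ j ∈ Finset.range n,
        ((φ (τ j ω + t₂) - ∫ a, φ (a + t₂) ∂ρ)
          - (φ (τ j ω + t) - ∫ a, φ (a + t) ∂ρ))) ^ 2 ∂P
      = ∫ ω, (∑ j ∈ Finset.range n, Xf j ω)^2 * (∑ j ∈ Finset.range n, Yf j ω)^2 ∂P := by
    refine integral_congr_ae ?_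
    have hae : ∀ᵐ ω ∂P, ∀ j ∈ Finset.range n, 0 ≤ τ j ω :=
      (ae_ball_iff (Finset.range n).countable_toSet).2 (fun j _ => hτae j)
    filter_upwards [hae] with ω hω
    have e1 : ∑ j ∈ Finset.range n,
        ((φ (τ j ω + t) - ∫ a, φ (a + t) ∂ρ)
          - (φ (τ j ω + t₁) - ∫ a, φ (a + t₁) ∂ρ))
        = ∑ j ∈ Finset.range n, Xf j ω := by
      refine Finset.sum_congr rfl (fun j hj => ?_)
      have h0 := hω j hj
      rw [hMeq t ht, hMeq t₁ ht₁, ← hψφ (τ j ω + t) (by linarith),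
        ← hψφ (τ j ω + t₁) (by linarith)]
    have e2 : ∑ j ∈ Finset.range n,
        ((φ (τ j ω + t₂) - ∫ a, φ (a + t₂) ∂ρ)
          - (φ (τ j ω + t) - ∫ a, φ (a + t) ∂ρ))
        = ∑ j ∈ Finset.range n, Yf j ω := by
      refine Finset.sum_congr rfl (fun j hj => ?_)
      have h0 := hω j hj
      rw [hMeq t₂ ht₂, hMeq t ht, ← hψφ (τ j ω + t₂) (by linarith),
        ← hψφ (τ j ω + t) (by linarith)]
    rw [e1, e2]
  rw [hstmt]
  -- final computation
  have s1 : Real.sqrt (t - t₁) ^ 2 = t - t₁ := Real.sq_sqrt (by linarith)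
  have s2 : Real.sqrt (t₂ - t) ^ 2 = t₂ - t := Real.sq_sqrt (by linarith)
  have s3 : c^2 = c2 := Real.sq_sqrt hc2
  have habsq : aa^2 * bb^2 = 16 * (c2^2 * ((t - t₁) * (t₂ - t))) := by
    rw [haadef, hbbdef]
    calc (2*(c*Real.sqrt (t-t₁)))^2 * (2*(c*Real.sqrt (t₂-t)))^2
        = 16*((c^2*c^2)*(Real.sqrt (t-t₁)^2 * Real.sqrt (t₂-t)^2)) := by ring
      _ = 16 * (c2^2 * ((t - t₁) * (t₂ - t))) := by rw [s1, s2, s3]; ring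
  have hNpos : (0:ℝ) < (N:ℝ)^2 := by
    have : (1:ℝ) ≤ (N:ℝ) := by exact_mod_cast hN
    positivity
  have hn2 : (n:ℝ)^2 ≤ (N:ℝ)^2 := by
    have h1 : (n:ℝ) ≤ (N:ℝ) := by exact_mod_cast hnN
    have h2 : (0:ℝ) ≤ (n:ℝ) := Nat.cast_nonneg n
    nlinarith
  have k1 : (t - t₁) * (t₂ - t) ≤ (t₂ - t₁) * (t₂ - t₁) :=
    mul_le_mul (by linarith) (by linarith) (by linarith) (by linarith)
  have k2 : (n:ℝ)^2*((t - t₁) * (t₂ - t)) ≤ (N:ℝ)^2*((t₂ - t₁) * (t₂ - t₁)) :=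
    mul_le_mul hn2 k1 (mul_nonneg (by linarith) (by linarith)) (le_of_lt hNpos)
  calc (1/(N:ℝ)^2) * ∫ ω, (∑ j ∈ Finset.range n, Xf j ω)^2
          * (∑ j ∈ Finset.range n, Yf j ω)^2 ∂P
      ≤ (1/(N:ℝ)^2) * (3*(n:ℝ)^2*(aa^2*bb^2)) := by
        apply mul_le_mul_of_nonneg_left hrec (by positivity)
    _ ≤ 48 * c2^2 * (t₂ - t₁)^2 := by
        rw [habsq, one_div_mul_eq_div, div_le_iff₀ hNpos]
        have k3 := mul_le_mul_of_nonneg_left k2 (show (0:ℝ) ≤ 48*c2^2 by positivity)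
        nlinarith [k3]
end

section
/- Uniqueness of the Volterra integral system (FLLN limit): suppose λ̄ : ℝ_+ → [0, λ*] is measurable and bounded, μ̄_0 is a finite measure on ℝ_+, and S̄(0) ∈ (0,1). Then the system S̄(t) = S̄(0) − ∫_0^t Ῡ(s) ds, 𝔉̄(t) = ∫_0^∞ λ̄(a+t) μ̄_0(da) + ∫_0^t λ̄(t−s) Ῡ(s) ds, Ῡ(t) = S̄(t) 𝔉̄(t), admits at most one solution (S̄, 𝔉̄) with S̄ continuous and 𝔉̄ measurable locally bounded with 0 ≤ 𝔉̄(t) ≤ λ*(μ̄_0(ℝ_+) + ∫_0^t Ῡ) and 0 ≤ S̄(t) ≤ 1. -/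
open Real Set MeasureTheory

lemma II_of_bounded {f : ℝ → ℝ} {x C : ℝ} (hx : 0 ≤ x) (hf : Measurable f)
    (hb : ∀ s ∈ Set.Icc (0:ℝ) x, |f s| ≤ C) : IntervalIntegrable f volume 0 x := by
  rw [intervalIntegrable_iff_integrableOn_Icc_of_le hx]
  refine Measure.integrableOn_of_bounded (M := C) (by simp) hf.aestronglyMeasurable ?_
  filter_upwards [ae_restrict_mem measurableSet_Icc] with s hs
  simpa using hb s hs

lemma gronwall_zero (h : ℝ → ℝ) (T B K : ℝ) (hT : 0 ≤ T) (hB : 0 ≤ B) (hK : 0 ≤ K)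
    (hmeas : Measurable h) (hnn : ∀ x ∈ Set.Icc (0:ℝ) T, 0 ≤ h x)
    (hbd : ∀ x ∈ Set.Icc (0:ℝ) T, h x ≤ B)
    (hineq : ∀ x ∈ Set.Icc (0:ℝ) T, h x ≤ K * ∫ s in (0:ℝ)..x, h s) :
    ∀ x ∈ Set.Icc (0:ℝ) T, h x = 0 := by
  have key : ∀ n : ℕ, ∀ x ∈ Set.Icc (0:ℝ) T, h x ≤ B * K ^ n * x ^ n / n.factorial := by
    intro n
    induction n with
    | zero => intro x hx; simpa using hbd x hx
    | succ n ih =>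
      intro x hx
      have hx0 : 0 ≤ x := hx.1
      have hhi : IntervalIntegrable h volume 0 x :=
        II_of_bounded hx0 hmeas (fun s hs => by
          rw [abs_of_nonneg (hnn s ⟨hs.1, hs.2.trans hx.2⟩)]
          exact hbd s ⟨hs.1, hs.2.trans hx.2⟩)
      have hgi : IntervalIntegrable (fun s => B * K ^ n * s ^ n / n.factorial) volume 0 x := by
        apply Continuous.intervalIntegrable; fun_prop
      have hmono : (∫ s in (0:ℝ)..x, h s) ≤ ∫ s in (0:ℝ)..x, B * K ^ n * s ^ n / n.factorial := by
        refine intervalIntegral.integral_mono_on hx0 hhi hgi ?_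
        intro s hs
        exact ih s ⟨hs.1, hs.2.trans hx.2⟩
      have hint : (∫ s in (0:ℝ)..x, B * K ^ n * s ^ n / n.factorial) =
          B * K ^ n / n.factorial * (x ^ (n + 1) / (n + 1)) := by
        have : (∫ s in (0:ℝ)..x, B * K ^ n * s ^ n / n.factorial)
            = B * K ^ n / n.factorial * ∫ s in (0:ℝ)..x, s ^ n := by
          rw [← intervalIntegral.integral_const_mul]
          congr 1; ext s; ring
        rw [this, integral_pow]; ring
      calc h x ≤ K * ∫ s in (0:ℝ)..x, h s := hineq x hx
        _ ≤ K * (B * K ^ n / n.factorial * (x ^ (n + 1) / (n + 1))) := by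
            rw [← hint]; exact mul_le_mul_of_nonneg_left hmono hK
        _ = B * K ^ (n + 1) * x ^ (n + 1) / (n+1).factorial := by
            rw [Nat.factorial_succ]; push_cast
            have hn : (n.factorial : ℝ) ≠ 0 := by positivity
            field_simp
            ring
  intro x hx
  refine le_antisymm ?_ (hnn x hx)
  have hlim : Filter.Tendsto (fun n : ℕ => B * K ^ n * x ^ n / n.factorial) Filter.atTop (nhds 0) := by
    have h1 : Filter.Tendsto (fun n : ℕ => (K * x) ^ n / n.factorial) Filter.atTop (nhds 0) :=
      FloorSemiring.tendsto_pow_div_factorial_atTop (K * x)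
    have := h1.const_mul B
    simp only [mul_zero] at this
    convert this using 2 with n
    rw [mul_pow]; ring
  exact ge_of_tendsto' hlim (fun n => key n x hx)

/-- **Uniqueness of the FLLN Volterra integral system.**
With `λ̄ : ℝ₊ → [0, λ*]` measurable bounded, `μ̄₀` a finite measure on `ℝ₊`, and
`S̄(0) ∈ (0,1)`, the system
`S̄(t) = S̄(0) - ∫₀ᵗ Ῡ(s) ds`,
`𝔉̄(t) = ∫₀^∞ λ̄(a+t) μ̄₀(da) + ∫₀ᵗ λ̄(t-s) Ῡ(s) ds`, `Ῡ = S̄ 𝔉̄`,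
admits at most one solution with `S̄` continuous, `0 ≤ S̄ ≤ 1`, and `𝔉̄`
measurable locally bounded with `0 ≤ 𝔉̄(t) ≤ λ*(μ̄₀(ℝ₊) + ∫₀ᵗ Ῡ)`. -/
theorem volterra_system_uniqueness
    (lamStar : ℝ) (hlamStar : 0 ≤ lamStar)
    (lamBar : ℝ → ℝ) (hlamMeas : Measurable lamBar)
    (hlamBd : ∀ t, 0 ≤ lamBar t ∧ lamBar t ≤ lamStar)
    (μ₀ : Measure ℝ) [IsFiniteMeasure μ₀] (hμ₀supp : μ₀ (Set.Iio 0) = 0)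
    (S0 : ℝ) (hS0 : S0 ∈ Set.Ioo (0:ℝ) 1)
    (S₁ S₂ F₁ F₂ : ℝ → ℝ)
    (hS₁cont : Continuous S₁) (hS₂cont : Continuous S₂)
    (hS₁bd : ∀ t, 0 ≤ t → 0 ≤ S₁ t ∧ S₁ t ≤ 1)
    (hS₂bd : ∀ t, 0 ≤ t → 0 ≤ S₂ t ∧ S₂ t ≤ 1)
    (hF₁meas : Measurable F₁) (hF₂meas : Measurable F₂)
    (hF₁locbd : ∀ T : ℝ, ∃ M, ∀ t ∈ Set.Icc 0 T, |F₁ t| ≤ M)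
    (hF₂locbd : ∀ T : ℝ, ∃ M, ∀ t ∈ Set.Icc 0 T, |F₂ t| ≤ M)
    (hF₁bd : ∀ t, 0 ≤ t → 0 ≤ F₁ t ∧
      F₁ t ≤ lamStar * ((μ₀ Set.univ).toReal + ∫ s in (0:ℝ)..t, S₁ s * F₁ s))
    (hF₂bd : ∀ t, 0 ≤ t → 0 ≤ F₂ t ∧
      F₂ t ≤ lamStar * ((μ₀ Set.univ).toReal + ∫ s in (0:ℝ)..t, S₂ s * F₂ s))
    (hS₁eq : ∀ t, 0 ≤ t → S₁ t = S0 - ∫ s in (0:ℝ)..t, S₁ s * F₁ s)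
    (hS₂eq : ∀ t, 0 ≤ t → S₂ t = S0 - ∫ s in (0:ℝ)..t, S₂ s * F₂ s)
    (hF₁eq : ∀ t, 0 ≤ t → F₁ t =
      (∫ a, lamBar (a + t) ∂μ₀) + ∫ s in (0:ℝ)..t, lamBar (t - s) * (S₁ s * F₁ s))
    (hF₂eq : ∀ t, 0 ≤ t → F₂ t =
      (∫ a, lamBar (a + t) ∂μ₀) + ∫ s in (0:ℝ)..t, lamBar (t - s) * (S₂ s * F₂ s)) :
    ∀ t, 0 ≤ t → S₁ t = S₂ t ∧ F₁ t = F₂ t := by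
  intro T hT
  obtain ⟨M₁, hM₁⟩ := hF₁locbd T
  obtain ⟨M₂, hM₂⟩ := hF₂locbd T
  have hM₁0 : 0 ≤ M₁ := le_trans (abs_nonneg _) (hM₁ 0 ⟨le_refl _, hT⟩)
  have hM₂0 : 0 ≤ M₂ := le_trans (abs_nonneg _) (hM₂ 0 ⟨le_refl _, hT⟩)
  set Y₁ := fun s => S₁ s * F₁ s with hY₁def
  set Y₂ := fun s => S₂ s * F₂ s with hY₂def
  set h := fun s => |Y₁ s - Y₂ s| with hhdef
  have hY₁meas : Measurable Y₁ := hS₁cont.measurable.mul hF₁meas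
  have hY₂meas : Measurable Y₂ := hS₂cont.measurable.mul hF₂meas
  have hhmeas : Measurable h := (hY₁meas.sub hY₂meas).abs
  -- bounds on Y on [0,T]
  have hY₁bd : ∀ s ∈ Set.Icc (0:ℝ) T, |Y₁ s| ≤ M₁ := by
    intro s hs
    rw [hY₁def, abs_mul]
    calc |S₁ s| * |F₁ s| ≤ 1 * M₁ := by
          apply mul_le_mul _ (hM₁ s hs) (abs_nonneg _) zero_le_one
          rw [abs_of_nonneg (hS₁bd s hs.1).1]; exact (hS₁bd s hs.1).2
      _ = M₁ := one_mul _
  have hY₂bd : ∀ s ∈ Set.Icc (0:ℝ) T, |Y₂ s| ≤ M₂ := by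
    intro s hs
    rw [hY₂def, abs_mul]
    calc |S₂ s| * |F₂ s| ≤ 1 * M₂ := by
          apply mul_le_mul _ (hM₂ s hs) (abs_nonneg _) zero_le_one
          rw [abs_of_nonneg (hS₂bd s hs.1).1]; exact (hS₂bd s hs.1).2
      _ = M₂ := one_mul _
  have hhbd : ∀ s ∈ Set.Icc (0:ℝ) T, h s ≤ M₁ + M₂ := by
    intro s hs
    calc h s ≤ |Y₁ s| + |Y₂ s| := abs_sub _ _
      _ ≤ M₁ + M₂ := add_le_add (hY₁bd s hs) (hY₂bd s hs)
  -- interval integrability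
  have hY₁int : ∀ x ∈ Set.Icc (0:ℝ) T, IntervalIntegrable Y₁ volume 0 x := fun x hx =>
    II_of_bounded hx.1 hY₁meas (fun s hs => hY₁bd s ⟨hs.1, hs.2.trans hx.2⟩)
  have hY₂int : ∀ x ∈ Set.Icc (0:ℝ) T, IntervalIntegrable Y₂ volume 0 x := fun x hx =>
    II_of_bounded hx.1 hY₂meas (fun s hs => hY₂bd s ⟨hs.1, hs.2.trans hx.2⟩)
  have hhint : ∀ x ∈ Set.Icc (0:ℝ) T, IntervalIntegrable h volume 0 x := fun x hx =>
    ((hY₁int x hx).sub (hY₂int x hx)).abs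
  -- (a) |S₁ x - S₂ x| ≤ ∫ h
  have hSdiff : ∀ x ∈ Set.Icc (0:ℝ) T, |S₁ x - S₂ x| ≤ ∫ s in (0:ℝ)..x, h s := by
    intro x hx
    have : S₁ x - S₂ x = ∫ s in (0:ℝ)..x, (Y₂ s - Y₁ s) := by
      rw [hS₁eq x hx.1, hS₂eq x hx.1,
        intervalIntegral.integral_sub (hY₂int x hx) (hY₁int x hx)]
      ring
    rw [this]
    calc |∫ s in (0:ℝ)..x, (Y₂ s - Y₁ s)| ≤ ∫ s in (0:ℝ)..x, |Y₂ s - Y₁ s| :=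
          intervalIntegral.abs_integral_le_integral_abs hx.1
      _ = ∫ s in (0:ℝ)..x, h s := by
          congr 1; ext s; rw [hhdef, abs_sub_comm]
  -- (b) |F₁ x - F₂ x| ≤ lamStar * ∫ h
  have hFdiff : ∀ x ∈ Set.Icc (0:ℝ) T, |F₁ x - F₂ x| ≤ lamStar * ∫ s in (0:ℝ)..x, h s := by
    intro x hx
    have hker₁ : IntervalIntegrable (fun s => lamBar (x - s) * Y₁ s) volume 0 x := by
      refine II_of_bounded hx.1 ((hlamMeas.comp (measurable_const.sub measurable_id)).mul
        hY₁meas) (C := lamStar * M₁) (fun s hs => ?_)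
      rw [abs_mul]
      exact mul_le_mul (by rw [abs_of_nonneg (hlamBd _).1]; exact (hlamBd _).2)
        (hY₁bd s ⟨hs.1, hs.2.trans hx.2⟩) (abs_nonneg _) hlamStar
    have hker₂ : IntervalIntegrable (fun s => lamBar (x - s) * Y₂ s) volume 0 x := by
      refine II_of_bounded hx.1 ((hlamMeas.comp (measurable_const.sub measurable_id)).mul
        hY₂meas) (C := lamStar * M₂) (fun s hs => ?_)
      rw [abs_mul]
      exact mul_le_mul (by rw [abs_of_nonneg (hlamBd _).1]; exact (hlamBd _).2)
        (hY₂bd s ⟨hs.1, hs.2.trans hx.2⟩) (abs_nonneg _) hlamStar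
    have heq : F₁ x - F₂ x = ∫ s in (0:ℝ)..x, lamBar (x - s) * (Y₁ s - Y₂ s) := by
      rw [hF₁eq x hx.1, hF₂eq x hx.1]
      have : (∫ s in (0:ℝ)..x, lamBar (x - s) * (Y₁ s - Y₂ s)) =
          (∫ s in (0:ℝ)..x, lamBar (x - s) * Y₁ s) -
          ∫ s in (0:ℝ)..x, lamBar (x - s) * Y₂ s := by
        rw [← intervalIntegral.integral_sub hker₁ hker₂]
        congr 1; ext s; ring
      rw [this]; ring
    rw [heq]
    calc |∫ s in (0:ℝ)..x, lamBar (x - s) * (Y₁ s - Y₂ s)|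
        ≤ ∫ s in (0:ℝ)..x, |lamBar (x - s) * (Y₁ s - Y₂ s)| :=
          intervalIntegral.abs_integral_le_integral_abs hx.1
      _ ≤ ∫ s in (0:ℝ)..x, lamStar * h s := by
          have hfint : IntervalIntegrable (fun s => |lamBar (x - s) * (Y₁ s - Y₂ s)|)
              volume 0 x := by
            refine II_of_bounded hx.1 (((hlamMeas.comp
              (measurable_const.sub measurable_id)).mul (hY₁meas.sub hY₂meas)).abs)
              (C := lamStar * (M₁ + M₂)) (fun s hs => ?_)
            rw [abs_abs, abs_mul]
            refine mul_le_mul (by rw [abs_of_nonneg (hlamBd _).1]; exact (hlamBd _).2)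
              ?_ (abs_nonneg _) hlamStar
            exact hhbd s ⟨hs.1, hs.2.trans hx.2⟩
          refine intervalIntegral.integral_mono_on hx.1 hfint
            ((hhint x hx).const_mul lamStar) (fun s hs => ?_)
          rw [abs_mul]
          exact mul_le_mul_of_nonneg_right
            (by rw [abs_of_nonneg (hlamBd _).1]; exact (hlamBd _).2) (abs_nonneg _)
      _ = lamStar * ∫ s in (0:ℝ)..x, h s := intervalIntegral.integral_const_mul _ _
  -- (c) Gronwall inequality for h
  have hmain : ∀ x ∈ Set.Icc (0:ℝ) T, h x ≤ (lamStar + M₂) * ∫ s in (0:ℝ)..x, h s := by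
    intro x hx
    have hInn : 0 ≤ ∫ s in (0:ℝ)..x, h s :=
      intervalIntegral.integral_nonneg hx.1 (fun s _ => abs_nonneg _)
    have hrw : Y₁ x - Y₂ x = S₁ x * (F₁ x - F₂ x) + F₂ x * (S₁ x - S₂ x) := by
      simp only [hY₁def, hY₂def]; ring
    have hS1abs : |S₁ x| ≤ 1 := by
      rw [abs_of_nonneg (hS₁bd x hx.1).1]; exact (hS₁bd x hx.1).2
    have e1 : |S₁ x| * |F₁ x - F₂ x| ≤ 1 * (lamStar * ∫ s in (0:ℝ)..x, h s) :=
      mul_le_mul hS1abs (hFdiff x hx) (abs_nonneg _) zero_le_one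
    have e2 : |F₂ x| * |S₁ x - S₂ x| ≤ M₂ * ∫ s in (0:ℝ)..x, h s :=
      mul_le_mul (hM₂ x hx) (hSdiff x hx) (abs_nonneg _) hM₂0
    have habs : h x ≤ |S₁ x| * |F₁ x - F₂ x| + |F₂ x| * |S₁ x - S₂ x| := by
      simp only [hhdef]
      rw [hrw, ← abs_mul, ← abs_mul]
      exact abs_add_le _ _
    calc h x ≤ 1 * (lamStar * ∫ s in (0:ℝ)..x, h s) + M₂ * ∫ s in (0:ℝ)..x, h s :=
          habs.trans (add_le_add e1 e2)
      _ = (lamStar + M₂) * ∫ s in (0:ℝ)..x, h s := by ring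
  have hzero : ∀ x ∈ Set.Icc (0:ℝ) T, h x = 0 :=
    gronwall_zero h T (M₁ + M₂) (lamStar + M₂) hT (by positivity) (by positivity)
      hhmeas (fun x _ => abs_nonneg _) hhbd hmain
  -- conclude
  have hintzero : (∫ s in (0:ℝ)..T, h s) = 0 := by
    have hcong : Set.EqOn h (fun _ => (0:ℝ)) (Set.uIcc 0 T) := by
      intro s hs
      rw [Set.uIcc_of_le hT] at hs
      exact hzero s hs
    rw [intervalIntegral.integral_congr hcong, intervalIntegral.integral_zero]
  have hTmem : T ∈ Set.Icc (0:ℝ) T := ⟨hT, le_refl _⟩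
  constructor
  · have h1 := hSdiff T hTmem
    rw [hintzero] at h1
    have : |S₁ T - S₂ T| = 0 := le_antisymm h1 (abs_nonneg _)
    exact sub_eq_zero.mp (abs_eq_zero.mp this)
  · have h1 := hFdiff T hTmem
    rw [hintzero, mul_zero] at h1
    have : |F₁ T - F₂ T| = 0 := le_antisymm h1 (abs_nonneg _)
    exact sub_eq_zero.mp (abs_eq_zero.mp this)
end
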